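/- arXiv:1711.09429 — 6 statements merged into one kernel-verified Lean document; each statement's English description precedes it below -/
import Mathlib

section
/- Suppose |I_j| ≥ 1 for all 1 ≤ j ≤ M. Then there exists a finite constant C, depending only on N, M, the data y_{ij}, b_i and the τ_i, such that for every σ ∈ (0,∞)^N, ∫_{ℝ^N} ∫_{ℝ^M} p(B,G,σ²) dG dB ≤ C · ∏_{i=1}^N σ_i^{ −|J_i| − 2 − 2α + Σ_{j∈J_i}|I_j|^{-1} } · exp( −β/σ_i² ). In particular, the marginal (unnormalized) posterior density of σ² is dominated by a product of inverse-Gamma kernels with shape parameters α_i = α + (|J_i| − Σ_{j∈J_i}|I_j|^{-1})/2 ≥ α and scale β. -/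
open MeasureTheory Real

lemma gauss_shift (W m : ℝ) (hW : 0 < W) :
    ∫ g : ℝ, Real.exp (-(W * (g - m) ^ 2)) = Real.sqrt (π / W) := by
  have h : (fun g : ℝ => Real.exp (-(W * (g - m) ^ 2)))
      = (fun x : ℝ => Real.exp (-W * x ^ 2)) ∘ (fun g : ℝ => g - m) := by
    ext g; simp [neg_mul]
  rw [h]
  rw [show ((fun x : ℝ => Real.exp (-W * x ^ 2)) ∘ (fun g : ℝ => g - m))
      = fun g : ℝ => (fun x : ℝ => Real.exp (-W * x ^ 2)) (g - m) from rfl]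
  rw [integral_sub_right_eq_self (fun x : ℝ => Real.exp (-W * x ^ 2)) m]
  exact integral_gaussian W

lemma quad_lower {ι : Type*} (s : Finset ι) (w c : ι → ℝ) (hw : ∀ i ∈ s, 0 ≤ w i)
    (hW : 0 < ∑ i ∈ s, w i) (g : ℝ) :
    (∑ i ∈ s, w i) * (g - (∑ i ∈ s, w i * c i) / (∑ i ∈ s, w i)) ^ 2
      ≤ ∑ i ∈ s, w i * (c i - g) ^ 2 := by
  set W := ∑ i ∈ s, w i with hWdef
  set S := ∑ i ∈ s, w i * c i with hSdef
  have key : (W * g - S) ^ 2 ≤ W * ∑ i ∈ s, w i * (c i - g) ^ 2 := by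
    have cs := Finset.sum_mul_sq_le_sq_mul_sq s (fun i => Real.sqrt (w i))
      (fun i => Real.sqrt (w i) * (g - c i))
    have h1 : ∑ i ∈ s, Real.sqrt (w i) * (Real.sqrt (w i) * (g - c i))
        = W * g - S := by
      rw [hWdef, hSdef, Finset.sum_mul, ← Finset.sum_sub_distrib]
      refine Finset.sum_congr rfl fun i hi => ?_
      rw [← mul_assoc, Real.mul_self_sqrt (hw i hi)]; ring
    have h2 : ∑ i ∈ s, Real.sqrt (w i) ^ 2 = W := by
      rw [hWdef]; exact Finset.sum_congr rfl fun i hi => Real.sq_sqrt (hw i hi)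
    have h3 : ∑ i ∈ s, (Real.sqrt (w i) * (g - c i)) ^ 2
        = ∑ i ∈ s, w i * (c i - g) ^ 2 := by
      refine Finset.sum_congr rfl fun i hi => ?_
      rw [mul_pow, Real.sq_sqrt (hw i hi)]
      ring_nf
    rw [h1, h2, h3] at cs
    exact cs
  have hWne : W ≠ 0 := ne_of_gt hW
  have expand : W * (g - S / W) ^ 2 = (W * g - S) ^ 2 / W := by
    field_simp
  rw [expand, div_le_iff₀ hW]
  calc (W * g - S) ^ 2 ≤ W * ∑ i ∈ s, w i * (c i - g) ^ 2 := key
    _ = (∑ i ∈ s, w i * (c i - g) ^ 2) * W := mul_comm _ _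

lemma gauss_sum_le {ι : Type*} (s : Finset ι) (hs : s.Nonempty) (w c : ι → ℝ)
    (hw : ∀ i ∈ s, 0 < w i) :
    ∫ g : ℝ, Real.exp (-∑ i ∈ s, w i * (c i - g) ^ 2)
      ≤ Real.sqrt (π / ∑ i ∈ s, w i) := by
  have hW : 0 < ∑ i ∈ s, w i := Finset.sum_pos hw hs
  set W := ∑ i ∈ s, w i with hWdef
  set m := (∑ i ∈ s, w i * c i) / W with hmdef
  have hint : Integrable (fun g : ℝ => Real.exp (-(W * (g - m) ^ 2))) := by
    have := (integrable_exp_neg_mul_sq hW).comp_sub_right m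
    simpa [neg_mul] using this
  calc ∫ g : ℝ, Real.exp (-∑ i ∈ s, w i * (c i - g) ^ 2)
      ≤ ∫ g : ℝ, Real.exp (-(W * (g - m) ^ 2)) := by
        refine integral_mono_of_nonneg (Filter.Eventually.of_forall fun g => (Real.exp_pos _).le)
          hint (Filter.Eventually.of_forall fun g => ?_)
        exact Real.exp_le_exp.2 (neg_le_neg (quad_lower s w c (fun i hi => (hw i hi).le) hW g))
    _ = Real.sqrt (π / W) := gauss_shift W m hW

lemma sqrt_pi_div_le {ι : Type*} (s : Finset ι) (hs : s.Nonempty) (σ : ι → ℝ)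
    (hσ : ∀ i, 0 < σ i) :
    Real.sqrt (π / ∑ i ∈ s, (2 * σ i ^ 2)⁻¹)
      ≤ Real.sqrt (2 * π) * ∏ i ∈ s, σ i ^ ((s.card : ℝ)⁻¹) := by
  have hn : 0 < (s.card : ℝ) := by exact_mod_cast Finset.card_pos.2 hs
  set n : ℝ := (s.card : ℝ) with hndef
  set Q : ℝ := ∏ i ∈ s, σ i ^ (n⁻¹) with hQdef
  have hQpos : 0 < Q := Finset.prod_pos fun i _ => Real.rpow_pos_of_pos (hσ i) _
  have hW : 0 < ∑ i ∈ s, (2 * σ i ^ 2)⁻¹ :=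
    Finset.sum_pos (fun i _ => inv_pos.2 (mul_pos two_pos (pow_pos (hσ i) 2))) hs
  -- AM-GM: P := ∏ ((2σ²)⁻¹)^{1/n} ≤ (1/n) Σ (2σ²)⁻¹ ≤ Σ (2σ²)⁻¹
  have amgm : ∏ i ∈ s, ((2 * σ i ^ 2)⁻¹) ^ (n⁻¹) ≤ ∑ i ∈ s, (2 * σ i ^ 2)⁻¹ := by
    have h := Real.geom_mean_le_arith_mean_weighted s (fun _ => n⁻¹)
      (fun i => (2 * σ i ^ 2)⁻¹) (fun i _ => by positivity)
      (by rw [Finset.sum_const, nsmul_eq_mul, ← hndef, mul_inv_cancel₀ (ne_of_gt hn)])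
      (fun i _ => (inv_pos.2 (mul_pos two_pos (pow_pos (hσ i) 2))).le)
    refine h.trans ?_
    refine Finset.sum_le_sum fun i hi => ?_
    have h1 : n⁻¹ ≤ 1 := by
      rw [inv_le_one_iff₀]; right; exact_mod_cast Nat.one_le_cast.2 (Finset.card_pos.2 hs)
    nlinarith [inv_pos.2 (mul_pos two_pos (pow_pos (hσ i) 2)), h1]
  -- P = (2 * Q^2)⁻¹
  have hP : ∏ i ∈ s, ((2 * σ i ^ 2)⁻¹) ^ (n⁻¹) = (2 * Q ^ 2)⁻¹ := by
    have e1 : ∀ i ∈ s, ((2 * σ i ^ 2)⁻¹) ^ (n⁻¹)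
        = (2 ^ (n⁻¹) * (σ i ^ (n⁻¹)) ^ 2)⁻¹ := by
      intro i hi
      have h2 : (0:ℝ) ≤ σ i ^ 2 := (pow_pos (hσ i) 2).le
      rw [Real.inv_rpow (by nlinarith), Real.mul_rpow (by norm_num) h2]
      congr 2
      rw [← Real.rpow_natCast (σ i) 2, ← Real.rpow_natCast (σ i ^ (n⁻¹)) 2,
        ← Real.rpow_mul (hσ i).le, ← Real.rpow_mul (hσ i).le]
      ring_nf
    rw [Finset.prod_congr rfl e1]
    rw [Finset.prod_inv_distrib, Finset.prod_mul_distrib, Finset.prod_const,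
      ← Real.rpow_natCast ((2:ℝ) ^ (n⁻¹)) s.card, ← Real.rpow_mul (by norm_num : (0:ℝ) ≤ 2),
      ← hndef, inv_mul_cancel₀ (ne_of_gt hn), Real.rpow_one, Finset.prod_pow]
  rw [hP] at amgm
  -- π / W ≤ 2π Q²
  have h2 : π / ∑ i ∈ s, (2 * σ i ^ 2)⁻¹ ≤ 2 * π * Q ^ 2 := by
    rw [div_le_iff₀ hW]
    have : (2 * Q ^ 2)⁻¹ * (2 * π * Q ^ 2) = π := by
      field_simp
    calc π = (2 * Q ^ 2)⁻¹ * (2 * π * Q ^ 2) := this.symm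
      _ ≤ (∑ i ∈ s, (2 * σ i ^ 2)⁻¹) * (2 * π * Q ^ 2) := by
          apply mul_le_mul_of_nonneg_right amgm; positivity
      _ = 2 * π * Q ^ 2 * ∑ i ∈ s, (2 * σ i ^ 2)⁻¹ := by ring
      _ = (2 * π * Q ^ 2) * ∑ i ∈ s, (2 * σ i ^ 2)⁻¹ := rfl
  calc Real.sqrt (π / ∑ i ∈ s, (2 * σ i ^ 2)⁻¹) ≤ Real.sqrt (2 * π * Q ^ 2) :=
      Real.sqrt_le_sqrt h2
    _ = Real.sqrt (2 * π) * Q := by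
        rw [Real.sqrt_mul (by positivity), Real.sqrt_sq hQpos.le]

/-- Domination of the marginal posterior of the variances: if every source is observed by
at least one instrument, then integrating the unnormalized posterior over `(B, G)` yields a
function of `σ` dominated by `C` times a product of inverse-Gamma kernels
`σ_i^{-|J_i| - 2 - 2α + Σ_{j ∈ J_i} |I_j|^{-1}} exp(-β/σ_i²)`. -/
theorem marginal_posterior_dominated
    (N M : ℕ) (hN : 1 ≤ N) (hM : 1 ≤ M)
    (J : Fin N → Finset (Fin M))
    (y : Fin N → Fin M → ℝ) (b : Fin N → ℝ)
    (τ : Fin N → ℝ) (hτ : ∀ i, 0 < τ i)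
    (α β : ℝ) (hα : 0 < α) (hβ : 0 < β)
    (hI : ∀ j : Fin M, 1 ≤ (Finset.univ.filter (fun i => j ∈ J i)).card)
    (p : (Fin N → ℝ) → (Fin M → ℝ) → (Fin N → ℝ) → ℝ)
    (hp : ∀ (B : Fin N → ℝ) (G : Fin M → ℝ) (σ : Fin N → ℝ),
      p B G σ =
        (∏ i, σ i ^ (-((J i).card : ℝ) - 2 - 2 * α)) *
          Real.exp (-(1/2) * ∑ i, ∑ j ∈ J i, (y i j + σ i ^ 2 / 2 - B i - G j) ^ 2 / σ i ^ 2
            - ∑ i, ((b i - B i) ^ 2 / (2 * τ i ^ 2) + β / σ i ^ 2))) :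
    ∃ C : ℝ, ∀ σ : Fin N → ℝ, (∀ i, 0 < σ i) →
      (∫ B : Fin N → ℝ, ∫ G : Fin M → ℝ, p B G σ)
        ≤ C * ∏ i,
            σ i ^ (-((J i).card : ℝ) - 2 - 2 * α
                + ∑ j ∈ J i, ((Finset.univ.filter (fun i' => j ∈ J i')).card : ℝ)⁻¹)
              * Real.exp (-β / σ i ^ 2) := by
  classical
  refine ⟨Real.sqrt (2 * π) ^ M * ∏ i, Real.sqrt (π * (2 * τ i ^ 2)), ?_⟩
  intro σ hσ
  have hIfin : ∀ j i, (i ∈ Finset.univ.filter (fun i' => j ∈ J i')) ↔ j ∈ J i := by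
    intro j i; simp
  set Ifin : Fin M → Finset (Fin N) := fun j => Finset.univ.filter (fun i' => j ∈ J i')
    with hIfindef
  have hIne : ∀ j, (Ifin j).Nonempty := fun j => Finset.card_pos.1 (hI j)
  set w : Fin N → ℝ := fun i => (2 * σ i ^ 2)⁻¹ with hwdef
  have hwpos : ∀ i, 0 < w i := fun i => inv_pos.2 (mul_pos two_pos (pow_pos (hσ i) 2))
  set K0 : ℝ := (∏ i, σ i ^ (-((J i).card : ℝ) - 2 - 2 * α)) * ∏ i, Real.exp (-β / σ i ^ 2)
    with hK0
  have hK0pos : 0 < K0 :=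
    mul_pos (Finset.prod_pos fun i _ => Real.rpow_pos_of_pos (hσ i) _)
      (Finset.prod_pos fun i _ => Real.exp_pos _)
  -- decomposition of the density
  have hdecomp : ∀ (B : Fin N → ℝ) (G : Fin M → ℝ), p B G σ
      = (K0 * Real.exp (-∑ i, (b i - B i) ^ 2 / (2 * τ i ^ 2)))
        * ∏ j, Real.exp (-∑ i ∈ Ifin j, w i * (y i j + σ i ^ 2 / 2 - B i - G j) ^ 2) := by
    intro B G
    have hsum1 : ∑ i, ∑ j ∈ J i, w i * (y i j + σ i ^ 2 / 2 - B i - G j) ^ 2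
        = ∑ j, ∑ i ∈ Ifin j, w i * (y i j + σ i ^ 2 / 2 - B i - G j) ^ 2 :=
      Finset.sum_comm' (fun i j => by simp [hIfindef])
    have hsum0 : (1/2 : ℝ) * ∑ i, ∑ j ∈ J i, (y i j + σ i ^ 2 / 2 - B i - G j) ^ 2 / σ i ^ 2
        = ∑ i, ∑ j ∈ J i, w i * (y i j + σ i ^ 2 / 2 - B i - G j) ^ 2 := by
      rw [Finset.mul_sum]
      refine Finset.sum_congr rfl fun i _ => ?_
      rw [Finset.mul_sum]
      refine Finset.sum_congr rfl fun j _ => ?_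
      simp only [hwdef]
      rw [mul_inv]
      ring
    have key : (-(1/2) * ∑ i, ∑ j ∈ J i, (y i j + σ i ^ 2 / 2 - B i - G j) ^ 2 / σ i ^ 2
          - ∑ i, ((b i - B i) ^ 2 / (2 * τ i ^ 2) + β / σ i ^ 2))
        = (∑ i, -(β / σ i ^ 2)) + ((-∑ i, (b i - B i) ^ 2 / (2 * τ i ^ 2))
            + ∑ j, -(∑ i ∈ Ifin j, w i * (y i j + σ i ^ 2 / 2 - B i - G j) ^ 2)) := by
      rw [Finset.sum_add_distrib, Finset.sum_neg_distrib, Finset.sum_neg_distrib]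
      have h2 := hsum0.trans hsum1
      linarith
    rw [hp, key, Real.exp_add, Real.exp_add, Real.exp_sum, Real.exp_sum, hK0]
    simp only [neg_div]
    ring
  -- inner integral over G
  have hInner : ∀ B : Fin N → ℝ, ∫ G : Fin M → ℝ, p B G σ
      = (K0 * Real.exp (-∑ i, (b i - B i) ^ 2 / (2 * τ i ^ 2)))
        * ∏ j, ∫ g : ℝ, Real.exp (-∑ i ∈ Ifin j, w i * (y i j + σ i ^ 2 / 2 - B i - g) ^ 2) := by
    intro B
    simp_rw [hdecomp B]
    rw [integral_const_mul]
    congr 1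
    exact integral_fintype_prod_eq_prod (ι := Fin M)
      (fun j g => Real.exp (-∑ i ∈ Ifin j, w i * (y i j + σ i ^ 2 / 2 - B i - g) ^ 2))
  -- bound on each factor
  have hFbound : ∀ (B : Fin N → ℝ) (j : Fin M),
      (∫ g : ℝ, Real.exp (-∑ i ∈ Ifin j, w i * (y i j + σ i ^ 2 / 2 - B i - g) ^ 2))
        ≤ Real.sqrt (2 * π) * ∏ i ∈ Ifin j, σ i ^ (((Ifin j).card : ℝ)⁻¹) := by
    intro B j
    refine (gauss_sum_le (Ifin j) (hIne j) w
      (fun i => y i j + σ i ^ 2 / 2 - B i) (fun i _ => hwpos i)).trans ?_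
    rw [hwdef]
    exact sqrt_pi_div_le (Ifin j) (hIne j) σ hσ
  set D : Fin M → ℝ := fun j => Real.sqrt (2 * π) * ∏ i ∈ Ifin j, σ i ^ (((Ifin j).card : ℝ)⁻¹)
    with hD
  have hDnn : ∀ j, 0 ≤ D j := fun j => by
    rw [hD]
    exact mul_nonneg (Real.sqrt_nonneg _)
      (Finset.prod_nonneg fun i _ => (Real.rpow_pos_of_pos (hσ i) _).le)
  have hInnerLe : ∀ B : Fin N → ℝ, ∫ G : Fin M → ℝ, p B G σ
      ≤ (K0 * ∏ j, D j) * Real.exp (-∑ i, (b i - B i) ^ 2 / (2 * τ i ^ 2)) := by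
    intro B
    rw [hInner B]
    have h1 : (∏ j, ∫ g : ℝ,
        Real.exp (-∑ i ∈ Ifin j, w i * (y i j + σ i ^ 2 / 2 - B i - g) ^ 2)) ≤ ∏ j, D j :=
      Finset.prod_le_prod (fun j _ => integral_nonneg fun g => (Real.exp_pos _).le)
        (fun j _ => hFbound B j)
    calc (K0 * Real.exp (-∑ i, (b i - B i) ^ 2 / (2 * τ i ^ 2)))
          * ∏ j, ∫ g : ℝ, Real.exp (-∑ i ∈ Ifin j, w i * (y i j + σ i ^ 2 / 2 - B i - g) ^ 2)
        ≤ (K0 * Real.exp (-∑ i, (b i - B i) ^ 2 / (2 * τ i ^ 2))) * ∏ j, D j :=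
          mul_le_mul_of_nonneg_left h1 (mul_nonneg hK0pos.le (Real.exp_pos _).le)
      _ = (K0 * ∏ j, D j) * Real.exp (-∑ i, (b i - B i) ^ 2 / (2 * τ i ^ 2)) := by ring
  have hτpos : ∀ i, (0:ℝ) < (2 * τ i ^ 2)⁻¹ :=
    fun i => inv_pos.2 (mul_pos two_pos (pow_pos (hτ i) 2))
  have hexpEq : ∀ B : Fin N → ℝ, Real.exp (-∑ i, (b i - B i) ^ 2 / (2 * τ i ^ 2))
      = ∏ i, Real.exp (-((2 * τ i ^ 2)⁻¹ * (B i - b i) ^ 2)) := by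
    intro B
    rw [← Finset.sum_neg_distrib, Real.exp_sum]
    refine Finset.prod_congr rfl fun i _ => ?_
    congr 1
    rw [mul_inv]
    ring
  -- outer integral
  have houter : (∫ B : Fin N → ℝ, ∫ G : Fin M → ℝ, p B G σ)
      ≤ ∫ B : Fin N → ℝ, (K0 * ∏ j, D j)
          * ∏ i, Real.exp (-((2 * τ i ^ 2)⁻¹ * (B i - b i) ^ 2)) := by
    refine integral_mono_of_nonneg
      (Filter.Eventually.of_forall fun B => integral_nonneg fun G => ?_) ?_
      (Filter.Eventually.of_forall fun B => ?_)
    · rw [hp]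
      exact mul_nonneg
        (Finset.prod_nonneg fun i _ => (Real.rpow_pos_of_pos (hσ i) _).le) (Real.exp_pos _).le
    · refine (Integrable.fintype_prod
        (f := fun i x => Real.exp (-((2 * τ i ^ 2)⁻¹ * (x - b i) ^ 2))) fun i => ?_).const_mul _
      have := (integrable_exp_neg_mul_sq (hτpos i)).comp_sub_right (b i)
      simpa [neg_mul] using this
    · exact (hInnerLe B).trans_eq (by rw [hexpEq B])
  have hOuterEq : (∫ B : Fin N → ℝ, (K0 * ∏ j, D j)
        * ∏ i, Real.exp (-((2 * τ i ^ 2)⁻¹ * (B i - b i) ^ 2)))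
      = (K0 * ∏ j, D j) * ∏ i, Real.sqrt (π * (2 * τ i ^ 2)) := by
    rw [integral_const_mul, integral_fintype_prod_volume_eq_prod (ι := Fin N)
      (fun i x => Real.exp (-((2 * τ i ^ 2)⁻¹ * (x - b i) ^ 2)))]
    congr 1
    refine Finset.prod_congr rfl fun i _ => ?_
    rw [gauss_shift _ (b i) (hτpos i), div_inv_eq_mul]
  -- reorganize the product of D's
  have hDprod : ∏ j, D j = Real.sqrt (2 * π) ^ M
      * ∏ i, σ i ^ (∑ j ∈ J i, ((Ifin j).card : ℝ)⁻¹) := by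
    rw [hD]
    rw [Finset.prod_mul_distrib, Finset.prod_const, Finset.card_univ, Fintype.card_fin]
    congr 1
    rw [Finset.prod_comm' (s' := J) (t' := Finset.univ) (fun j i => by simp [hIfindef])]
    exact Finset.prod_congr rfl fun i _ => (Real.rpow_sum_of_pos (hσ i) _ _).symm
  -- final assembly
  refine houter.trans (hOuterEq.trans_le ?_)
  rw [hDprod, hK0]
  have hfinal : ∀ i : Fin N,
      σ i ^ (-((J i).card : ℝ) - 2 - 2 * α + ∑ j ∈ J i, ((Ifin j).card : ℝ)⁻¹)
        = σ i ^ (-((J i).card : ℝ) - 2 - 2 * α) * σ i ^ (∑ j ∈ J i, ((Ifin j).card : ℝ)⁻¹) :=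
    fun i => Real.rpow_add (hσ i) _ _
  calc (∏ i, σ i ^ (-((J i).card : ℝ) - 2 - 2 * α)) * (∏ i, Real.exp (-β / σ i ^ 2))
        * (Real.sqrt (2 * π) ^ M * ∏ i, σ i ^ (∑ j ∈ J i, ((Ifin j).card : ℝ)⁻¹))
        * ∏ i, Real.sqrt (π * (2 * τ i ^ 2))
      = (Real.sqrt (2 * π) ^ M * ∏ i, Real.sqrt (π * (2 * τ i ^ 2)))
        * ∏ i, (σ i ^ (-((J i).card : ℝ) - 2 - 2 * α)
            * σ i ^ (∑ j ∈ J i, ((Ifin j).card : ℝ)⁻¹) * Real.exp (-β / σ i ^ 2)) := by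
        rw [Finset.prod_mul_distrib, Finset.prod_mul_distrib]
        ring
    _ = (Real.sqrt (2 * π) ^ M * ∏ i, Real.sqrt (π * (2 * τ i ^ 2)))
        * ∏ i, (σ i ^ (-((J i).card : ℝ) - 2 - 2 * α + ∑ j ∈ J i, ((Ifin j).card : ℝ)⁻¹)
            * Real.exp (-β / σ i ^ 2)) := by
        refine congrArg _ (Finset.prod_congr rfl fun i _ => ?_)
        rw [hfinal i]
    _ ≤ (Real.sqrt (2 * π) ^ M * ∏ i, Real.sqrt (π * (2 * τ i ^ 2)))
        * ∏ i, (σ i ^ (-((J i).card : ℝ) - 2 - 2 * α + ∑ j ∈ J i, ((Ifin j).card : ℝ)⁻¹)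
            * Real.exp (-β / σ i ^ 2)) := le_refl _
end

section
/- Proposition (closed-form posterior covariance, full observation): let N, M ≥ 1, σ_i > 0 and τ_i > 0 for 1 ≤ i ≤ N, and let Ω be the (N+M)×(N+M) symmetric matrix with Ω_{i,i} = Mσ_i^{-2} + τ_i^{-2} (1 ≤ i ≤ N), Ω_{N+j,N+j} = Σ_{u=1}^N σ_u^{-2} (1 ≤ j ≤ M), Ω_{i,N+j} = Ω_{N+j,i} = σ_i^{-2}, and all other entries zero. Set W_i = Mσ_i^{-2}/(Mσ_i^{-2} + τ_i^{-2}) and S = Σ_{u=1}^N τ_u^{-2} W_u. Then Ω is invertible and its inverse satisfies, for all 1 ≤ i, i' ≤ N (i ≠ i') and 1 ≤ j, j' ≤ M (j ≠ j'): (Ω^{-1})_{i,i} = (Mσ_i^{-2} + τ_i^{-2})^{-1} (1 + Mσ_i^{-2} W_i / S); (Ω^{-1})_{i,i'} = W_i W_{i'} / S; (Ω^{-1})_{i,N+j} = −W_i / S; (Ω^{-1})_{N+j,N+j} = (Σ_{u=1}^N σ_u^{-2})^{-1} (1 + Σ_{u=1}^N W_u σ_u^{-2} / S); (Ω^{-1})_{N+j,N+j'}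 = (Σ_{u=1}^N σ_u^{-2})^{-1} Σ_{u=1}^N W_u σ_u^{-2} / S. -/
/-- Closed-form posterior covariance under full observation: the precision matrix `Ω` of
`(B, G)` is invertible and the entries of its inverse are given in closed form in terms of
the shrinkage weights `W_i` and `S = Σ_u τ_u^{-2} W_u`. -/
theorem posterior_covariance_closed_form
    (N M : ℕ) (hN : 1 ≤ N) (hM : 1 ≤ M)
    (σ τ : Fin N → ℝ) (hσ : ∀ i, 0 < σ i) (hτ : ∀ i, 0 < τ i)
    (Ω : Matrix (Fin N ⊕ Fin M) (Fin N ⊕ Fin M) ℝ)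
    (hΩ1 : ∀ i i' : Fin N, Ω (Sum.inl i) (Sum.inl i')
      = if i = i' then (M : ℝ) / σ i ^ 2 + 1 / τ i ^ 2 else 0)
    (hΩ2 : ∀ j j' : Fin M, Ω (Sum.inr j) (Sum.inr j')
      = if j = j' then ∑ u, 1 / σ u ^ 2 else 0)
    (hΩ3 : ∀ (i : Fin N) (j : Fin M), Ω (Sum.inl i) (Sum.inr j) = 1 / σ i ^ 2)
    (hΩ4 : ∀ (j : Fin M) (i : Fin N), Ω (Sum.inr j) (Sum.inl i) = 1 / σ i ^ 2)
    (W : Fin N → ℝ)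
    (hW : ∀ i, W i = ((M : ℝ) / σ i ^ 2) / ((M : ℝ) / σ i ^ 2 + 1 / τ i ^ 2))
    (S : ℝ) (hS : S = ∑ u, W u / τ u ^ 2) :
    IsUnit Ω.det ∧
    (∀ i, Ω⁻¹ (Sum.inl i) (Sum.inl i)
      = ((M : ℝ) / σ i ^ 2 + 1 / τ i ^ 2)⁻¹ * (1 + ((M : ℝ) / σ i ^ 2) * W i / S)) ∧
    (∀ i i', i ≠ i' → Ω⁻¹ (Sum.inl i) (Sum.inl i') = W i * W i' / S) ∧
    (∀ i j, Ω⁻¹ (Sum.inl i) (Sum.inr j) = -(W i) / S) ∧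
    (∀ j, Ω⁻¹ (Sum.inr j) (Sum.inr j)
      = (∑ u, 1 / σ u ^ 2)⁻¹ * (1 + (∑ u, W u / σ u ^ 2) / S)) ∧
    (∀ j j', j ≠ j' → Ω⁻¹ (Sum.inr j) (Sum.inr j')
      = (∑ u, 1 / σ u ^ 2)⁻¹ * ((∑ u, W u / σ u ^ 2) / S)) := by
  have hN' : Nonempty (Fin N) := ⟨⟨0, hN⟩⟩
  have hM0 : (0:ℝ) < M := by exact_mod_cast hM
  have hσ2 : ∀ i, (0:ℝ) < σ i ^ 2 := fun i => pow_pos (hσ i) 2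
  have hτ2 : ∀ i, (0:ℝ) < τ i ^ 2 := fun i => pow_pos (hτ i) 2
  have hdpos : ∀ i, (0:ℝ) < (M : ℝ) / σ i ^ 2 + 1 / τ i ^ 2 :=
    fun i => add_pos (div_pos hM0 (hσ2 i)) (div_pos one_pos (hτ2 i))
  have hWpos : ∀ i, 0 < W i := fun i => by
    rw [hW]; exact div_pos (div_pos hM0 (hσ2 i)) (hdpos i)
  have hWd : ∀ i, W i * ((M : ℝ) / σ i ^ 2 + 1 / τ i ^ 2) = (M : ℝ) / σ i ^ 2 := fun i => by
    rw [hW]; exact div_mul_cancel₀ _ (ne_of_gt (hdpos i))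
  have hWd2 : ∀ u, W u * ((M : ℝ) * τ u ^ 2 + σ u ^ 2) = M * τ u ^ 2 := fun u => by
    have h := hWd u
    have hσ0 : σ u ≠ 0 := ne_of_gt (hσ u)
    have hτ0 : τ u ≠ 0 := ne_of_gt (hτ u)
    field_simp at h
    exact mul_right_cancel₀ (ne_of_gt (hσ2 u)) (by linear_combination (σ u ^ 2) * h)
  have hSpos : 0 < S := by
    rw [hS]
    exact Finset.sum_pos (fun u _ => div_pos (hWpos u) (hτ2 u)) Finset.univ_nonempty
  have hTpos : (0:ℝ) < ∑ u, 1 / σ u ^ 2 :=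
    Finset.sum_pos (fun u _ => div_pos one_pos (hσ2 u)) Finset.univ_nonempty
  have hkey : (M : ℝ) * (∑ u, 1 / σ u ^ 2) = S + M * ∑ u, W u / σ u ^ 2 := by
    rw [hS, Finset.mul_sum, Finset.mul_sum, ← Finset.sum_add_distrib]
    refine Finset.sum_congr rfl fun u _ => ?_
    linear_combination -hWd u
  set T : ℝ := ∑ u, 1 / σ u ^ 2 with hT
  set R : ℝ := ∑ u, W u / σ u ^ 2 with hR
  have h1 : (M : ℝ) * R + S = M * T := by linarith [hkey]
  set A : Matrix (Fin N ⊕ Fin M) (Fin N ⊕ Fin M) ℝ := fun p q =>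
    match p, q with
    | Sum.inl i, Sum.inl i' =>
        W i * W i' / S + if i = i' then ((M : ℝ) / σ i ^ 2 + 1 / τ i ^ 2)⁻¹ else 0
    | Sum.inl i, Sum.inr _ => -(W i) / S
    | Sum.inr _, Sum.inl i' => -(W i') / S
    | Sum.inr j, Sum.inr j' => T⁻¹ * R / S + if j = j' then T⁻¹ else 0
    with hAdef
  have hS0 : S ≠ 0 := ne_of_gt hSpos
  have hT0 : T ≠ 0 := ne_of_gt hTpos
  have hMA : Ω * A = 1 := by
    apply Matrix.ext
    rintro (i | j) (i' | j') <;>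
      simp only [Matrix.mul_apply, Fintype.sum_sum_type, hΩ1, hΩ2, hΩ3, hΩ4,
        Matrix.one_apply, ite_mul, zero_mul, Finset.sum_ite_eq, Finset.mem_univ, if_true,
        Finset.sum_const, Finset.card_univ, Fintype.card_fin, nsmul_eq_mul, Sum.inl.injEq,
        Sum.inr.injEq, reduceCtorEq] <;>
      simp only [hAdef, Fintype.sum_sum_type, hΩ1, hΩ2, hΩ3, hΩ4,
        Matrix.one_apply, ite_mul, zero_mul, Finset.sum_ite_eq, Finset.mem_univ, if_true,
        Finset.sum_const, Finset.card_univ, Fintype.card_fin, nsmul_eq_mul, Sum.inl.injEq,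
        Sum.inr.injEq, reduceCtorEq]
    · -- (inl i, inl i')
      have hσ0 : σ i ≠ 0 := ne_of_gt (hσ i)
      have hτ0 : τ i ≠ 0 := ne_of_gt (hτ i)
      rcases eq_or_ne i i' with rfl | hne
      · rw [if_pos rfl, if_pos rfl, mul_add, mul_inv_cancel₀ (ne_of_gt (hdpos i))]
        field_simp
        linear_combination (W i) * hWd2 i
      · rw [if_neg hne, if_neg hne, add_zero]
        field_simp
        linear_combination (W i') * hWd2 i
    · -- (inl i, inr j')
      have hσ0 : σ i ≠ 0 := ne_of_gt (hσ i)
      have hτ0 : τ i ≠ 0 := ne_of_gt (hτ i)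
      simp only [mul_add, Finset.sum_add_distrib, mul_ite, mul_zero, Finset.sum_ite_eq',
        Finset.mem_univ, if_true, Finset.sum_const, Finset.card_univ, Fintype.card_fin,
        nsmul_eq_mul, if_false]
      field_simp
      linear_combination (-T) * hWd2 i
        + (τ i ^ 2) * h1
    · -- (inr j, inl i')
      have hσ0 : σ i' ≠ 0 := ne_of_gt (hσ i')
      have hτ0 : τ i' ≠ 0 := ne_of_gt (hτ i')
      simp only [mul_add, Finset.sum_add_distrib, mul_ite, mul_zero, Finset.sum_ite_eq',
        Finset.mem_univ, if_true, if_false]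
      have hsum : ∑ x, 1 / σ x ^ 2 * (W x * W i' / S) = R * (W i' / S) := by
        rw [hR, Finset.sum_mul]
        exact Finset.sum_congr rfl fun x _ => by ring
      rw [hsum]
      field_simp
      linear_combination (R - T) * hWd2 i' + (τ i' ^ 2) * h1
    · -- (inr j, inr j')
      have hsum : ∑ x, 1 / σ x ^ 2 * (-W x / S) = -(R / S) := by
        rw [hR, Finset.sum_div, ← Finset.sum_neg_distrib]
        exact Finset.sum_congr rfl fun x _ => by ring
      rw [hsum, mul_add, show T * (T⁻¹ * R / S) = T * T⁻¹ * (R / S) by ring,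
        mul_inv_cancel₀ hT0, one_mul]
      rcases eq_or_ne j j' with rfl | hne
      · rw [if_pos rfl, if_pos rfl, mul_inv_cancel₀ hT0]; ring
      · rw [if_neg hne, if_neg hne, mul_zero]; ring
  have hdet : IsUnit Ω.det := Matrix.isUnit_det_of_right_inverse hMA
  have hinv : Ω⁻¹ = A := Matrix.inv_eq_right_inv hMA
  refine ⟨hdet, ?_, ?_, ?_, ?_, ?_⟩
  · intro i
    have hσ0 : σ i ≠ 0 := ne_of_gt (hσ i)
    have hτ0 : τ i ≠ 0 := ne_of_gt (hτ i)
    have hd0 : ((M : ℝ) / σ i ^ 2 + 1 / τ i ^ 2) ≠ 0 := ne_of_gt (hdpos i)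
    rw [hinv]
    show W i * W i / S + (if i = i then ((M : ℝ) / σ i ^ 2 + 1 / τ i ^ 2)⁻¹ else 0) = _
    rw [if_pos rfl]
    have e : ((M : ℝ) / σ i ^ 2 + 1 / τ i ^ 2)⁻¹ * ((M : ℝ) / σ i ^ 2) = W i := by
      rw [hW, div_eq_mul_inv, mul_comm]
      exact (div_eq_mul_inv _ _).symm
    linear_combination (-(W i / S)) * e
  · intro i i' hne
    simp [hinv, hAdef, hne]
  · intro i j
    simp [hinv, hAdef]
  · intro j
    rw [hinv]
    show T⁻¹ * R / S + (if j = j then T⁻¹ else 0) = _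
    rw [if_pos rfl]
    ring
  · intro j j' hne
    simp only [hinv, hAdef, if_neg hne]
    ring
end

section
/- Homogeneous-variance specialization: let N, M ≥ 1 and σ, τ > 0, and let Ω be the (N+M)×(N+M) symmetric matrix with Ω_{i,i} = Mσ^{-2} + τ^{-2} (1 ≤ i ≤ N), Ω_{N+j,N+j} = Nσ^{-2} (1 ≤ j ≤ M), Ω_{i,N+j} = Ω_{N+j,i} = σ^{-2}, and all other entries zero. Then Ω is invertible with (Ω^{-1})_{i,i} = (Mσ^{-2} + τ^{-2})^{-1} ( 1 + Mσ^{-2}/(Nτ^{-2}) ), (Ω^{-1})_{i,N+j} = −τ²/N, and (Ω^{-1})_{N+j,N+j} = (σ² + τ²)/N, for all 1 ≤ i ≤ N and 1 ≤ j ≤ M. In particular Var(B̂_i) = (Mσ^{-2}+τ^{-2})^{-1}(1 + Mσ^{-2}/(Nτ^{-2})) and Cov(B̂_i, Ĝ_j) = −τ²/N. -/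
/-- Homogeneous-variance specialization of the posterior covariance: with equal variances
`σ` and `τ`, `Ω` is invertible with `Var(B̂_i) = (Mσ^{-2}+τ^{-2})^{-1}(1 + Mσ^{-2}/(Nτ^{-2}))`,
`Cov(B̂_i, Ĝ_j) = -τ²/N` and `Var(Ĝ_j) = (σ² + τ²)/N`. -/
theorem homogeneous_posterior_covariance
    (N M : ℕ) (hN : 1 ≤ N) (hM : 1 ≤ M)
    (σ τ : ℝ) (hσ : 0 < σ) (hτ : 0 < τ)
    (Ω : Matrix (Fin N ⊕ Fin M) (Fin N ⊕ Fin M) ℝ)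
    (hΩ1 : ∀ i i' : Fin N, Ω (Sum.inl i) (Sum.inl i')
      = if i = i' then (M : ℝ) / σ ^ 2 + 1 / τ ^ 2 else 0)
    (hΩ2 : ∀ j j' : Fin M, Ω (Sum.inr j) (Sum.inr j')
      = if j = j' then (N : ℝ) / σ ^ 2 else 0)
    (hΩ3 : ∀ (i : Fin N) (j : Fin M), Ω (Sum.inl i) (Sum.inr j) = 1 / σ ^ 2)
    (hΩ4 : ∀ (j : Fin M) (i : Fin N), Ω (Sum.inr j) (Sum.inl i) = 1 / σ ^ 2) :
    IsUnit Ω.det ∧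
    (∀ i, Ω⁻¹ (Sum.inl i) (Sum.inl i)
      = ((M : ℝ) / σ ^ 2 + 1 / τ ^ 2)⁻¹ * (1 + ((M : ℝ) / σ ^ 2) / ((N : ℝ) / τ ^ 2))) ∧
    (∀ (i : Fin N) (j : Fin M), Ω⁻¹ (Sum.inl i) (Sum.inr j) = -(τ ^ 2) / N) ∧
    (∀ j, Ω⁻¹ (Sum.inr j) (Sum.inr j) = (σ ^ 2 + τ ^ 2) / N) := by
  have hσ2 : (σ:ℝ)^2 ≠ 0 := by positivity
  have hτ2 : (τ:ℝ)^2 ≠ 0 := by positivity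
  have hNne : (N:ℝ) ≠ 0 := Nat.cast_ne_zero.mpr (by omega)
  have hMne : (M:ℝ) ≠ 0 := Nat.cast_ne_zero.mpr (by omega)
  have ha : (M:ℝ)/σ^2 + 1/τ^2 ≠ 0 := by positivity
  set S : Matrix (Fin N ⊕ Fin M) (Fin N ⊕ Fin M) ℝ :=
    Matrix.of (fun x y => match x, y with
      | Sum.inl i, Sum.inl i' =>
          (if i = i' then ((M:ℝ)/σ^2 + 1/τ^2)⁻¹ else 0)
            + M * τ^2 / (σ^2 * N * ((M:ℝ)/σ^2 + 1/τ^2))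
      | Sum.inl _, Sum.inr _ => -(τ^2)/N
      | Sum.inr _, Sum.inl _ => -(τ^2)/N
      | Sum.inr j, Sum.inr j' => (if j = j' then σ^2/N else 0) + τ^2/N) with hS
  have hmul : Ω * S = 1 := by
    ext x y
    have key : ∀ x y, (Ω * S) x y = (1 : Matrix (Fin N ⊕ Fin M) (Fin N ⊕ Fin M) ℝ) x y := by
      intro x y
      cases x with
      | inl i =>
        cases y with
        | inl i' =>
          simp only [Matrix.mul_apply, Fintype.sum_sum_type, hΩ1, hΩ3, hS, Matrix.of_apply,
            Matrix.one_apply, Sum.inl.injEq, ite_mul, zero_mul, mul_add, mul_ite, mul_zero,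
            Finset.sum_add_distrib, Finset.sum_ite_eq, Finset.sum_ite_eq', Finset.mem_univ,
            if_true, Finset.sum_const, Finset.card_univ, Fintype.card_fin, nsmul_eq_mul]
          by_cases h : i = i' <;> simp only [h, if_true, if_false] <;> field_simp <;> ring
        | inr j =>
          simp only [Matrix.mul_apply, Fintype.sum_sum_type, hΩ1, hΩ3, hS, Matrix.of_apply,
            Matrix.one_apply, ite_mul, zero_mul, mul_add, mul_ite, mul_zero,
            Finset.sum_add_distrib, Finset.sum_ite_eq, Finset.sum_ite_eq', Finset.mem_univ,
            if_true, Finset.sum_const, Finset.card_univ, Fintype.card_fin, nsmul_eq_mul,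
            reduceCtorEq, reduceIte]
          field_simp
          ring
      | inr j =>
        cases y with
        | inl i' =>
          simp only [Matrix.mul_apply, Fintype.sum_sum_type, hΩ2, hΩ4, hS, Matrix.of_apply,
            Matrix.one_apply, ite_mul, zero_mul, mul_add, mul_ite, mul_zero,
            Finset.sum_add_distrib, Finset.sum_ite_eq, Finset.sum_ite_eq', Finset.mem_univ,
            if_true, Finset.sum_const, Finset.card_univ, Fintype.card_fin, nsmul_eq_mul,
            reduceCtorEq, reduceIte]
          field_simp
          ring
        | inr j' =>
          simp only [Matrix.mul_apply, Fintype.sum_sum_type, hΩ2, hΩ4, hS, Matrix.of_apply,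
            Matrix.one_apply, Sum.inr.injEq, ite_mul, zero_mul, mul_add, mul_ite, mul_zero,
            Finset.sum_add_distrib, Finset.sum_ite_eq, Finset.sum_ite_eq', Finset.mem_univ,
            if_true, Finset.sum_const, Finset.card_univ, Fintype.card_fin, nsmul_eq_mul]
          by_cases h : j = j' <;> simp only [h, if_true, if_false] <;> field_simp <;> ring
    exact key x y
  have hinv : Ω⁻¹ = S := Matrix.inv_eq_right_inv hmul
  refine ⟨Matrix.isUnit_det_of_right_inverse hmul, ?_, ?_, ?_⟩
  · intro i
    simp only [hinv, hS, Matrix.of_apply, if_pos rfl, reduceIte]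
    field_simp
  · intro i j
    simp [hinv, hS]
  · intro j
    simp only [hinv, hS, Matrix.of_apply, if_pos rfl, reduceIte]
    field_simp
end

section
/- Quantitative asymptotic orders of the MLE covariance: let N, M ≥ 1 and suppose σ_i, τ_i > 0 satisfy 0 < c₁ ≤ σ_i/τ_i ≤ c₂ and σ_i ≤ u for all 1 ≤ i ≤ N. With Ω the full-observation precision matrix and W_i = Mσ_i^{-2}/(Mσ_i^{-2}+τ_i^{-2}), S = Σ_u τ_u^{-2}W_u, the entries of Ω^{-1} satisfy: (i) (Ω^{-1})_{N+j,N+j} ≤ u²(1 + c₁^{-2})/N; (ii) |(Ω^{-1})_{i,N+j}| ≤ u²(1 + c₂²)/(c₁² N); (iii) (Ω^{-1})_{i,i} ≤ u² ( 1/M + (1 + c₂²)/(c₁² N) ). Hence Var(Ĝ_j) = O(N^{-1}), Cov(B̂_i, Ĝ_j) = −O(N^{-1}), and Var(B̂_i) = O(N^{-1} + M^{-1}) as N, M → ∞. -/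
/- Quantitative asymptotic orders of the MLE covariance: under the uniform bounds
`0 < c₁ ≤ σ_i/τ_i ≤ c₂` and `σ_i ≤ u`, the entries of the inverse of the full-observation
precision matrix satisfy `Var(Ĝ_j) ≤ u²(1 + c₁^{-2})/N`,
`|Cov(B̂_i, Ĝ_j)| ≤ u²(1 + c₂²)/(c₁² N)` and
-/
set_option maxHeartbeats 1000000 in
/-- Quantitative asymptotic orders of the MLE covariance. -/
theorem mle_covariance_orders
    (N M : ℕ) (hN : 1 ≤ N) (hM : 1 ≤ M)
    (σ τ : Fin N → ℝ) (hσ : ∀ i, 0 < σ i) (hτ : ∀ i, 0 < τ i)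
    (c₁ c₂ u : ℝ) (hc₁ : 0 < c₁)
    (hlow : ∀ i, c₁ ≤ σ i / τ i) (hhigh : ∀ i, σ i / τ i ≤ c₂)
    (hu : ∀ i, σ i ≤ u)
    (Ω : Matrix (Fin N ⊕ Fin M) (Fin N ⊕ Fin M) ℝ)
    (hΩ1 : ∀ i i' : Fin N, Ω (Sum.inl i) (Sum.inl i')
      = if i = i' then (M : ℝ) / σ i ^ 2 + 1 / τ i ^ 2 else 0)
    (hΩ2 : ∀ j j' : Fin M, Ω (Sum.inr j) (Sum.inr j')
      = if j = j' then ∑ u', 1 / σ u' ^ 2 else 0)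
    (hΩ3 : ∀ (i : Fin N) (j : Fin M), Ω (Sum.inl i) (Sum.inr j) = 1 / σ i ^ 2)
    (hΩ4 : ∀ (j : Fin M) (i : Fin N), Ω (Sum.inr j) (Sum.inl i) = 1 / σ i ^ 2) :
    (∀ j, Ω⁻¹ (Sum.inr j) (Sum.inr j) ≤ u ^ 2 * (1 + c₁ ^ (-2 : ℤ)) / N) ∧
    (∀ (i : Fin N) (j : Fin M),
      |Ω⁻¹ (Sum.inl i) (Sum.inr j)| ≤ u ^ 2 * (1 + c₂ ^ 2) / (c₁ ^ 2 * N)) ∧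
    (∀ i, Ω⁻¹ (Sum.inl i) (Sum.inl i)
      ≤ u ^ 2 * (1 / M + (1 + c₂ ^ 2) / (c₁ ^ 2 * N))) := by
  classical
  have hNpos : (0:ℝ) < N := by exact_mod_cast hN
  have hMpos : (0:ℝ) < M := by exact_mod_cast hM
  have hu0 : 0 < u := lt_of_lt_of_le (hσ ⟨0, hN⟩) (hu _)
  have hu2 : (0:ℝ) < u ^ 2 := pow_pos hu0 2
  have hσ2 : ∀ i, (0:ℝ) < σ i ^ 2 := fun i => pow_pos (hσ i) 2
  have hτ2 : ∀ i, (0:ℝ) < τ i ^ 2 := fun i => pow_pos (hτ i) 2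
  have hσu : ∀ i, σ i ^ 2 ≤ u ^ 2 := fun i => by nlinarith [hσ i, hu i]
  have hτσ : ∀ i, c₁ ^ 2 * τ i ^ 2 ≤ σ i ^ 2 := by
    intro i
    have h : c₁ * τ i ≤ σ i := (le_div_iff₀ (hτ i)).mp (hlow i)
    have h' := mul_self_le_mul_self (mul_nonneg hc₁.le (hτ i).le) h
    nlinarith [h']
  have hMc : (0:ℝ) < (M:ℝ) + c₁ ^ 2 := by positivity
  have hden : ∀ k, (0:ℝ) < (M:ℝ) * τ k ^ 2 + σ k ^ 2 := fun k => by
    have := hτ2 k; have := hσ2 k; nlinarith [hMpos]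
  -- abstract atoms
  obtain ⟨a, ha⟩ : ∃ a : Fin N → ℝ, a = fun i => 1 / σ i ^ 2 := ⟨_, rfl⟩
  obtain ⟨d, hd⟩ : ∃ d : Fin N → ℝ, d = fun i => (M:ℝ) / σ i ^ 2 + 1 / τ i ^ 2 := ⟨_, rfl⟩
  obtain ⟨S₀, hS₀def⟩ : ∃ x : ℝ, x = ∑ k, a k := ⟨_, rfl⟩
  obtain ⟨s, hsdef⟩ : ∃ x : ℝ, x = ∑ k, a k ^ 2 / d k := ⟨_, rfl⟩
  obtain ⟨T, hTdef⟩ : ∃ x : ℝ, x = ∑ k, 1 / ((M:ℝ) * τ k ^ 2 + σ k ^ 2) := ⟨_, rfl⟩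
  have hapos : ∀ i, 0 < a i := fun i => by
    simp only [ha]; exact div_pos one_pos (hσ2 i)
  have hdpos : ∀ i, 0 < d i := fun i => by
    simp only [hd]; exact add_pos (div_pos hMpos (hσ2 i)) (div_pos one_pos (hτ2 i))
  have hS₀pos : 0 < S₀ := hS₀def ▸
    Finset.sum_pos (fun k _ => hapos k) ⟨⟨0, hN⟩, Finset.mem_univ _⟩
  have hspos : 0 ≤ s := hsdef ▸
    Finset.sum_nonneg fun k _ => div_nonneg (sq_nonneg _) (hdpos k).le
  have hTpos : 0 < T := hTdef ▸
    Finset.sum_pos (fun k _ => div_pos one_pos (hden k)) ⟨⟨0, hN⟩, Finset.mem_univ _⟩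
  -- key identity S₀ = T + M * s
  have hST : S₀ = T + (M:ℝ) * s := by
    rw [hS₀def, hTdef, hsdef, Finset.mul_sum, ← Finset.sum_add_distrib]
    refine Finset.sum_congr rfl fun k _ => ?_
    have h1 : σ k ≠ 0 := ne_of_gt (hσ k)
    have h2 : τ k ≠ 0 := ne_of_gt (hτ k)
    have h3 : (M:ℝ) * τ k ^ 2 + σ k ^ 2 ≠ 0 := ne_of_gt (hden k)
    have h4 : (M:ℝ) / σ k ^ 2 + 1 / τ k ^ 2 ≠ 0 := by
      have := hdpos k; simp only [hd] at this; exact ne_of_gt this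
    simp only [ha, hd]
    field_simp
    ring
  -- entry-wise inequalities
  have had : ∀ i, a i / d i ≤ 1 / ((M:ℝ) + c₁ ^ 2) := by
    intro i
    have e : a i / d i = τ i ^ 2 / ((M:ℝ) * τ i ^ 2 + σ i ^ 2) := by
      have h1 : σ i ≠ 0 := ne_of_gt (hσ i)
      have h2 : τ i ≠ 0 := ne_of_gt (hτ i)
      have h4' : d i ≠ 0 := ne_of_gt (hdpos i)
      rw [div_eq_div_iff h4' (ne_of_gt (hden i))]
      simp only [ha, hd]
      field_simp
    rw [e, div_le_div_iff₀ (hden i) hMc]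
    nlinarith [hτσ i, hσu i, hτ2 i, hMpos]
  have hdinv : ∀ i, 1 / d i ≤ u ^ 2 / (M:ℝ) := by
    intro i
    rw [div_le_div_iff₀ (hdpos i) hMpos, one_mul]
    simp only [hd]
    have h1 : (M:ℝ) ≤ u ^ 2 * ((M:ℝ) / σ i ^ 2) := by
      rw [mul_div_assoc', le_div_iff₀ (hσ2 i)]
      nlinarith [hσu i, hMpos]
    have h2 : 0 ≤ u ^ 2 * (1 / τ i ^ 2) := by positivity
    nlinarith [h1, h2]
  have hTinv : 1 / T ≤ u ^ 2 * ((M:ℝ) + c₁ ^ 2) / (c₁ ^ 2 * N) := by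
    have hcpos : (0:ℝ) < c₁ ^ 2 / (u ^ 2 * ((M:ℝ) + c₁ ^ 2)) :=
      div_pos (pow_pos hc₁ 2) (mul_pos hu2 hMc)
    have hlb : (N:ℝ) * (c₁ ^ 2 / (u ^ 2 * ((M:ℝ) + c₁ ^ 2))) ≤ T := by
      rw [hTdef]
      calc (N:ℝ) * (c₁ ^ 2 / (u ^ 2 * ((M:ℝ) + c₁ ^ 2)))
          = ∑ _k : Fin N, c₁ ^ 2 / (u ^ 2 * ((M:ℝ) + c₁ ^ 2)) := by
            rw [Finset.sum_const, Finset.card_univ, Fintype.card_fin, nsmul_eq_mul]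
        _ ≤ ∑ k, 1 / ((M:ℝ) * τ k ^ 2 + σ k ^ 2) := by
            refine Finset.sum_le_sum fun k _ => ?_
            rw [div_le_div_iff₀ (mul_pos hu2 hMc) (hden k)]
            nlinarith [hτσ k, hσu k, hMpos, hτ2 k, sq_nonneg c₁]
    have hlbpos : (0:ℝ) < (N:ℝ) * (c₁ ^ 2 / (u ^ 2 * ((M:ℝ) + c₁ ^ 2))) :=
      mul_pos hNpos hcpos
    have h := one_div_le_one_div_of_le hlbpos hlb
    have e : 1 / ((N:ℝ) * (c₁ ^ 2 / (u ^ 2 * ((M:ℝ) + c₁ ^ 2))))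
        = u ^ 2 * ((M:ℝ) + c₁ ^ 2) / (c₁ ^ 2 * N) := by
      rw [one_div, mul_comm, div_mul_eq_mul_div, inv_div]
    rw [e] at h
    exact h
  have hS₀inv : 1 / S₀ ≤ u ^ 2 / N := by
    have hlb : (N:ℝ) * (1 / u ^ 2) ≤ S₀ := by
      rw [hS₀def]
      calc (N:ℝ) * (1 / u ^ 2) = ∑ _k : Fin N, 1 / u ^ 2 := by
            rw [Finset.sum_const, Finset.card_univ, Fintype.card_fin, nsmul_eq_mul]
        _ ≤ ∑ k, a k := by
            refine Finset.sum_le_sum fun k _ => ?_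
            simp only [ha]
            exact one_div_le_one_div_of_le (hσ2 k) (hσu k)
    have hlbpos : (0:ℝ) < (N:ℝ) * (1 / u ^ 2) := mul_pos hNpos (div_pos one_pos hu2)
    have h := one_div_le_one_div_of_le hlbpos hlb
    have e : 1 / ((N:ℝ) * (1 / u ^ 2)) = u ^ 2 / N := by
      rw [mul_one_div, one_div_div]
    rw [e] at h
    exact h
  have hsS : s ≤ S₀ * (1 / ((M:ℝ) + c₁ ^ 2)) := by
    rw [hsdef, hS₀def, Finset.sum_mul]
    refine Finset.sum_le_sum fun k _ => ?_
    have e : a k ^ 2 / d k = a k * (a k / d k) := by ring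
    rw [e]
    exact mul_le_mul_of_nonneg_left (had k) (hapos k).le
  -- rewrite Ω entries in terms of the atoms
  have hΩ1' : ∀ i i' : Fin N, Ω (Sum.inl i) (Sum.inl i') = if i = i' then d i else 0 := by
    intro i i'; rw [hΩ1]; simp only [hd]
  have hΩ3' : ∀ (i : Fin N) (j : Fin M), Ω (Sum.inl i) (Sum.inr j) = a i := by
    intro i j; rw [hΩ3]; simp only [ha]
  have hΩ4' : ∀ (j : Fin M) (i : Fin N), Ω (Sum.inr j) (Sum.inl i) = a i := by
    intro j i; rw [hΩ4]; simp only [ha]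
  have hΩ2' : ∀ j j' : Fin M, Ω (Sum.inr j) (Sum.inr j') = if j = j' then S₀ else 0 := by
    intro j j'; rw [hΩ2, hS₀def]; simp only [ha]
  clear hΩ1 hΩ2 hΩ3 hΩ4 hTdef ha hd hlow hhigh hu hσ hτ hσ2 hτ2 hσu hτσ hden
  clear σ τ
  -- nonzeroness
  have hdne : ∀ i, d i ≠ 0 := fun i => ne_of_gt (hdpos i)
  have hTne : T ≠ 0 := ne_of_gt hTpos
  have hS₀ne : S₀ ≠ 0 := ne_of_gt hS₀pos
  have hTMs : T + (M:ℝ) * s ≠ 0 := by rw [← hST]; exact hS₀ne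
  -- explicit inverse
  set Ψ : Matrix (Fin N ⊕ Fin M) (Fin N ⊕ Fin M) ℝ :=
    Sum.elim
      (fun i => Sum.elim
        (fun i' => (if i = i' then 1 / d i else 0) + a i / d i * (a i' / d i') * M / T)
        (fun _ => -(a i / d i / T)))
      (fun j => Sum.elim
        (fun i' => -(a i' / d i' / T))
        (fun j' => (if j = j' then 1 / S₀ else 0) + s / (S₀ * T))) with hΨ
  clear_value Ψ
  have hmul : Ω * Ψ = 1 := by
    ext p q
    rw [Matrix.mul_apply, Fintype.sum_sum_type]
    cases p with
    | inl i =>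
      cases q with
      | inl i' =>
        simp only [hΨ, hΩ1', hΩ3', Sum.elim_inl, Sum.elim_inr, Matrix.one_apply,
          Sum.inl.injEq, ite_mul, zero_mul, Finset.sum_ite_eq, Finset.mem_univ, if_true,
          Finset.sum_const, Finset.card_univ, Fintype.card_fin, nsmul_eq_mul]
        have h1 := hdne i
        have h2 := hdne i'
        by_cases h : i = i'
        · subst h; simp only [if_pos rfl, if_true]
          field_simp
          ring
        · simp only [if_neg h]
          field_simp
          ring
      | inr j' =>
        simp only [hΨ, hΩ1', hΩ3', Sum.elim_inl, Sum.elim_inr, Matrix.one_apply,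
          ite_mul, zero_mul, Finset.sum_ite_eq, Finset.mem_univ, if_true,
          reduceCtorEq, if_false]
        have hsum : ∑ j : Fin M, a i * ((if j = j' then 1 / S₀ else 0) + s / (S₀ * T))
            = a i * (1 / S₀) + (M:ℝ) * (a i * (s / (S₀ * T))) := by
          rw [Finset.sum_congr rfl (fun j _ => mul_add (a i) _ _), Finset.sum_add_distrib]
          congr 1
          · simp only [mul_ite, mul_zero, Finset.sum_ite_eq', Finset.mem_univ, if_true]
          · rw [Finset.sum_const, Finset.card_univ, Fintype.card_fin, nsmul_eq_mul]
        rw [hsum, hST]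
        have h1 := hdne i
        field_simp
        ring
    | inr j =>
      cases q with
      | inl i' =>
        simp only [hΨ, hΩ4', hΩ2', Sum.elim_inl, Sum.elim_inr, Matrix.one_apply,
          reduceCtorEq, if_false, ite_mul, zero_mul, Finset.sum_ite_eq, Finset.mem_univ,
          if_true]
        have hsum : ∑ k, a k * ((if k = i' then 1 / d k else 0) + a k / d k * (a i' / d i') * M / T)
            = a i' * (1 / d i') + s * (a i' / d i' * (M:ℝ) / T) := by
          rw [Finset.sum_congr rfl (fun k _ => mul_add (a k) _ _), Finset.sum_add_distrib]
          congr 1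
          · simp only [mul_ite, mul_zero, Finset.sum_ite_eq', Finset.mem_univ, if_true]
          · rw [hsdef, Finset.sum_mul]
            exact Finset.sum_congr rfl fun k _ => by ring
        rw [hsum, hST]
        have h2 := hdne i'
        field_simp
        ring
      | inr j' =>
        simp only [hΨ, hΩ4', hΩ2', Sum.elim_inl, Sum.elim_inr, Matrix.one_apply,
          Sum.inr.injEq, ite_mul, zero_mul, Finset.sum_ite_eq, Finset.mem_univ, if_true]
        have hsum : ∑ k, a k * -(a k / d k / T) = -(s / T) := by
          rw [hsdef, Finset.sum_div, ← Finset.sum_neg_distrib]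
          exact Finset.sum_congr rfl fun k _ => by ring
        rw [hsum]
        by_cases h : j = j'
        · subst h; simp only [if_pos rfl, if_true]
          field_simp
          ring
        · simp only [if_neg h]
          field_simp
          ring
  have hinv : Ω⁻¹ = Ψ := Matrix.inv_eq_right_inv hmul
  -- auxiliary numeric facts for the bounds
  have hadnn : ∀ i, 0 ≤ a i / d i := fun i => le_of_lt (div_pos (hapos i) (hdpos i))
  have hTinn : 0 ≤ 1 / T := le_of_lt (div_pos one_pos hTpos)
  have hMcinv : (0:ℝ) ≤ 1 / ((M:ℝ) + c₁ ^ 2) := le_of_lt (div_pos one_pos hMc)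
  have hbase : ∀ x : ℝ, x ≤ 1 / ((M:ℝ) + c₁ ^ 2) → 0 ≤ x →
      (x * (1 / T)) ≤ u ^ 2 / (c₁ ^ 2 * N) := by
    intro x hx hx0
    calc x * (1 / T) ≤ (1 / ((M:ℝ) + c₁ ^ 2)) * (u ^ 2 * ((M:ℝ) + c₁ ^ 2) / (c₁ ^ 2 * N)) :=
          mul_le_mul hx hTinv hTinn hMcinv
      _ = u ^ 2 / (c₁ ^ 2 * N) := by
          rw [div_mul_div_comm, one_mul]
          rw [div_eq_div_iff (by positivity) (by positivity)]
          ring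
  have hc₂sq : u ^ 2 / (c₁ ^ 2 * N) ≤ u ^ 2 * (1 + c₂ ^ 2) / (c₁ ^ 2 * N) := by
    apply div_le_div_of_nonneg_right ?_ (by positivity)
    nlinarith [sq_nonneg c₂, sq_nonneg u]
  have hc₁ne : c₁ ≠ 0 := ne_of_gt hc₁
  have hNne : (N:ℝ) ≠ 0 := ne_of_gt hNpos
  have hMne : (M:ℝ) ≠ 0 := ne_of_gt hMpos
  refine ⟨?_, ?_, ?_⟩
  · -- variance of Ĝ
    intro j
    rw [hinv, hΨ]
    simp only [Sum.elim_inr, if_pos rfl]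
    have e1 : s / (S₀ * T) = (s / S₀) * (1 / T) := by
      rw [← div_div, div_eq_mul_one_div]
    have hsS₀ : s / S₀ ≤ 1 / ((M:ℝ) + c₁ ^ 2) := by
      rw [div_le_iff₀ hS₀pos]
      exact hsS.trans (le_of_eq (mul_comm _ _))
    have h2 : s / (S₀ * T) ≤ u ^ 2 / (c₁ ^ 2 * N) := by
      rw [e1]
      exact hbase _ hsS₀ (div_nonneg hspos hS₀pos.le)
    have e3 : u ^ 2 * (1 + c₁ ^ (-2:ℤ)) / N = u ^ 2 / N + u ^ 2 / (c₁ ^ 2 * N) := by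
      have hz : c₁ ^ (-2:ℤ) = 1 / c₁ ^ 2 := by
        rw [zpow_neg, one_div]
        norm_cast
      rw [hz, mul_add, mul_one, mul_one_div, add_div, div_div]
    rw [e3]
    exact add_le_add hS₀inv h2
  · -- covariance
    intro i j
    rw [hinv, hΨ]
    simp only [Sum.elim_inl, Sum.elim_inr]
    rw [abs_neg, abs_of_nonneg (div_nonneg (hadnn i) hTpos.le)]
    rw [div_eq_mul_one_div]
    exact le_trans (hbase _ (had i) (hadnn i)) hc₂sq
  · -- variance of B̂
    intro i
    rw [hinv, hΨ]
    simp only [Sum.elim_inl, if_pos rfl]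
    have hb1 : a i / d i * (a i / d i) ≤ 1 / ((M:ℝ) + c₁ ^ 2) * (1 / ((M:ℝ) + c₁ ^ 2)) :=
      mul_le_mul (had i) (had i) (hadnn i) hMcinv
    have hb2 : a i / d i * (a i / d i) * (M:ℝ)
        ≤ 1 / ((M:ℝ) + c₁ ^ 2) * (1 / ((M:ℝ) + c₁ ^ 2)) * (M:ℝ) :=
      mul_le_mul_of_nonneg_right hb1 hMpos.le
    have hb3 : a i / d i * (a i / d i) * (M:ℝ) * (1 / T)
        ≤ 1 / ((M:ℝ) + c₁ ^ 2) * (1 / ((M:ℝ) + c₁ ^ 2)) * (M:ℝ)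
          * (u ^ 2 * ((M:ℝ) + c₁ ^ 2) / (c₁ ^ 2 * N)) := by
      refine mul_le_mul hb2 hTinv hTinn ?_
      positivity
    have e4 : 1 / ((M:ℝ) + c₁ ^ 2) * (1 / ((M:ℝ) + c₁ ^ 2)) * (M:ℝ)
          * (u ^ 2 * ((M:ℝ) + c₁ ^ 2) / (c₁ ^ 2 * N))
        = ((M:ℝ) / ((M:ℝ) + c₁ ^ 2)) * (u ^ 2 / (c₁ ^ 2 * N)) := by
      field_simp
    have e5 : (M:ℝ) / ((M:ℝ) + c₁ ^ 2) ≤ 1 := by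
      rw [div_le_one hMc]
      nlinarith [sq_nonneg c₁]
    have hb4 : ((M:ℝ) / ((M:ℝ) + c₁ ^ 2)) * (u ^ 2 / (c₁ ^ 2 * N)) ≤ u ^ 2 / (c₁ ^ 2 * N) := by
      have hy : (0:ℝ) ≤ u ^ 2 / (c₁ ^ 2 * N) := by positivity
      calc ((M:ℝ) / ((M:ℝ) + c₁ ^ 2)) * (u ^ 2 / (c₁ ^ 2 * N))
          ≤ 1 * (u ^ 2 / (c₁ ^ 2 * N)) := mul_le_mul_of_nonneg_right e5 hy
        _ = u ^ 2 / (c₁ ^ 2 * N) := one_mul _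
    have hstep : a i / d i * (a i / d i) * (M:ℝ) / T ≤ u ^ 2 * (1 + c₂ ^ 2) / (c₁ ^ 2 * N) := by
      rw [div_eq_mul_one_div]
      refine le_trans hb3 (le_trans (le_of_eq e4) (le_trans hb4 hc₂sq))
    have efin : u ^ 2 * (1 / (M:ℝ) + (1 + c₂ ^ 2) / (c₁ ^ 2 * N))
        = u ^ 2 / (M:ℝ) + u ^ 2 * (1 + c₂ ^ 2) / (c₁ ^ 2 * N) := by
      ring
    rw [efin]
    exact add_le_add (hdinv i) hstep
end

section
/- Condition number lower bound (near non-identifiability): let N, M ≥ 1, σ_i > 0, τ_i > 0, and let Ω be the (N+M)×(N+M) symmetric matrix with Ω_{i,i} = |J_i|σ_i^{-2} + τ_i^{-2} (1 ≤ i ≤ N), Ω_{N+j,N+j} = Σ_{i∈I_j} σ_i^{-2} (1 ≤ j ≤ M), Ω_{i,N+j} = Ω_{N+j,i} = σ_i^{-2} if j ∈ J_i and 0 otherwise, and all other entries zero. Suppose Ω is positive definite, with largest and smallest eigenvalues λ_max and λ_min. Then, taking u = (1_N, 1_M)ᵀ and v = (1_N, −1_M)ᵀ, one has uᵀΩu =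 Σ_{i=1}^N τ_i^{-2} + 4 Σ_{i=1}^N |J_i| σ_i^{-2}, vᵀΩv = Σ_{i=1}^N τ_i^{-2}, and consequently λ_max/λ_min ≥ 1 + 4 (Σ_{i=1}^N |J_i| σ_i^{-2}) / (Σ_{i=1}^N τ_i^{-2}). -/
open Matrix
open scoped Pointwise

lemma rayleigh_upper' {n : Type*} [Fintype n] [DecidableEq n] (A : Matrix n n ℝ)
    (hA : A.IsHermitian) (lmax : ℝ) (h : ∀ μ ∈ spectrum ℝ A, μ ≤ lmax) (x : n → ℝ) :
    x ⬝ᵥ A *ᵥ x ≤ lmax * (x ⬝ᵥ x) := by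
  set B : Matrix n n ℝ := lmax • (1 : Matrix n n ℝ) - A with hBdef
  have h1 : (lmax • (1 : Matrix n n ℝ)).IsHermitian := by simp [Matrix.IsHermitian]
  have hB : B.IsHermitian := h1.sub hA
  have hPSD : B.PosSemidef := by
    refine (Matrix.IsHermitian.posSemidef_iff_eigenvalues_nonneg hB).2 (fun i => ?_)
    have hmem := hB.eigenvalues_mem_spectrum_real i
    have hBeq : B = algebraMap ℝ (Matrix n n ℝ) lmax - A := by
      rw [Algebra.algebraMap_eq_smul_one]
    have hspec : spectrum ℝ B = ({lmax} : Set ℝ) - spectrum ℝ A := by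
      rw [hBeq]; exact (spectrum.singleton_sub_eq A lmax).symm
    rw [hspec] at hmem
    obtain ⟨a, ha, b, hb, hab⟩ := hmem
    simp only [Set.mem_singleton_iff] at ha
    subst ha
    rw [← hab]
    simpa using h b hb
  have := hPSD.dotProduct_mulVec_nonneg x
  simp only [star_trivial, hBdef, sub_mulVec, smul_mulVec, one_mulVec,
    dotProduct_sub, dotProduct_smul, smul_eq_mul] at this
  linarith

lemma rayleigh_lower' {n : Type*} [Fintype n] [DecidableEq n] (A : Matrix n n ℝ)
    (hA : A.IsHermitian) (lmin : ℝ) (h : ∀ μ ∈ spectrum ℝ A, lmin ≤ μ) (x : n → ℝ) :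
    lmin * (x ⬝ᵥ x) ≤ x ⬝ᵥ A *ᵥ x := by
  set B : Matrix n n ℝ := A - lmin • (1 : Matrix n n ℝ) with hBdef
  have h1 : (lmin • (1 : Matrix n n ℝ)).IsHermitian := by simp [Matrix.IsHermitian]
  have hB : B.IsHermitian := hA.sub h1
  have hPSD : B.PosSemidef := by
    refine (Matrix.IsHermitian.posSemidef_iff_eigenvalues_nonneg hB).2 (fun i => ?_)
    have hmem := hB.eigenvalues_mem_spectrum_real i
    have hBeq : B = A - algebraMap ℝ (Matrix n n ℝ) lmin := by
      rw [Algebra.algebraMap_eq_smul_one]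
    have hspec : spectrum ℝ B = spectrum ℝ A - ({lmin} : Set ℝ) := by
      rw [hBeq]; exact (spectrum.sub_singleton_eq A lmin).symm
    rw [hspec] at hmem
    obtain ⟨a, ha, b, hb, hab⟩ := hmem
    simp only [Set.mem_singleton_iff] at hb
    subst hb
    rw [← hab]
    simpa using h a ha
  have := hPSD.dotProduct_mulVec_nonneg x
  simp only [star_trivial, hBdef, sub_mulVec, smul_mulVec, one_mulVec,
    dotProduct_sub, dotProduct_smul, smul_eq_mul] at this
  linarith

/-- Condition number lower bound (near non-identifiability): for the precision matrix `Ω`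
of `(B, G)`, with `u = (1_N, 1_M)ᵀ` and `v = (1_N, -1_M)ᵀ`, one has
`uᵀΩu = Σ τ_i^{-2} + 4 Σ |J_i| σ_i^{-2}`, `vᵀΩv = Σ τ_i^{-2}`, and hence the condition
number satisfies `λ_max/λ_min ≥ 1 + 4 (Σ |J_i| σ_i^{-2})/(Σ τ_i^{-2})`. -/
theorem condition_number_lower_bound
    (N M : ℕ) (hN : 1 ≤ N) (hM : 1 ≤ M)
    (σ τ : Fin N → ℝ) (hσ : ∀ i, 0 < σ i) (hτ : ∀ i, 0 < τ i)
    (J : Fin N → Finset (Fin M))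
    (Ω : Matrix (Fin N ⊕ Fin M) (Fin N ⊕ Fin M) ℝ)
    (hΩ1 : ∀ i i' : Fin N, Ω (Sum.inl i) (Sum.inl i')
      = if i = i' then ((J i).card : ℝ) / σ i ^ 2 + 1 / τ i ^ 2 else 0)
    (hΩ2 : ∀ j j' : Fin M, Ω (Sum.inr j) (Sum.inr j')
      = if j = j' then ∑ i ∈ Finset.univ.filter (fun i => j ∈ J i), 1 / σ i ^ 2 else 0)
    (hΩ3 : ∀ (i : Fin N) (j : Fin M),
      Ω (Sum.inl i) (Sum.inr j) = if j ∈ J i then 1 / σ i ^ 2 else 0)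
    (hΩ4 : ∀ (j : Fin M) (i : Fin N),
      Ω (Sum.inr j) (Sum.inl i) = if j ∈ J i then 1 / σ i ^ 2 else 0)
    (hPD : Ω.PosDef)
    (lmax lmin : ℝ)
    (hmax : lmax ∈ spectrum ℝ Ω ∧ ∀ μ ∈ spectrum ℝ Ω, μ ≤ lmax)
    (hmin : lmin ∈ spectrum ℝ Ω ∧ ∀ μ ∈ spectrum ℝ Ω, lmin ≤ μ)
    (u v : (Fin N ⊕ Fin M) → ℝ)
    (hu : u = Sum.elim (fun _ => 1) (fun _ => 1))
    (hv : v = Sum.elim (fun _ => 1) (fun _ => -1)) :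
    u ⬝ᵥ Ω.mulVec u = (∑ i, 1 / τ i ^ 2) + 4 * ∑ i, ((J i).card : ℝ) / σ i ^ 2 ∧
    v ⬝ᵥ Ω.mulVec v = ∑ i, 1 / τ i ^ 2 ∧
    1 + 4 * (∑ i, ((J i).card : ℝ) / σ i ^ 2) / (∑ i, 1 / τ i ^ 2) ≤ lmax / lmin := by
  set S : ℝ := ∑ i, ((J i).card : ℝ) / σ i ^ 2 with hS
  set T : ℝ := ∑ i, 1 / τ i ^ 2 with hT
  -- key sum identity
  have hswap : ∀ c : Fin N → ℝ,
      (∑ j : Fin M, ∑ i : Fin N, if j ∈ J i then c i else 0)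
        = ∑ i : Fin N, ((J i).card : ℝ) * c i := by
    intro c
    rw [Finset.sum_comm]
    congr 1
    ext i
    simp [Finset.sum_ite_mem, Finset.univ_inter]
  have hQu : u ⬝ᵥ Ω *ᵥ u = T + 4 * S := by
    subst hu
    simp only [dotProduct, mulVec, Fintype.sum_sum_type, Sum.elim_inl, Sum.elim_inr,
      hΩ1, hΩ2, hΩ3, hΩ4, mul_one, one_mul, Finset.sum_ite_eq, Finset.mem_univ, if_true,
      Finset.sum_filter, Finset.sum_ite_mem, Finset.univ_inter, Finset.sum_const,
      nsmul_eq_mul]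
    rw [Finset.sum_add_distrib, Finset.sum_add_distrib, Finset.sum_add_distrib,
      hswap (fun i => 1 / σ i ^ 2)]
    simp only [mul_one_div]
    rw [hS, hT]; ring
  have hQv : v ⬝ᵥ Ω *ᵥ v = T := by
    subst hv
    simp only [dotProduct, mulVec, Fintype.sum_sum_type, Sum.elim_inl, Sum.elim_inr,
      hΩ1, hΩ2, hΩ3, hΩ4, mul_one, one_mul, mul_neg, neg_mul, neg_neg,
      Finset.sum_ite_eq, Finset.mem_univ, if_true,
      Finset.sum_filter, Finset.sum_ite_mem, Finset.univ_inter, Finset.sum_const,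
      nsmul_eq_mul, Finset.sum_neg_distrib]
    have h1 : ∀ x : Fin N,
        ↑(J x).card / σ x ^ 2 + 1 / τ x ^ 2 + -(↑(J x).card * (1 / σ x ^ 2)) = 1 / τ x ^ 2 :=
      fun x => by ring
    have h2 : ∀ x : Fin M,
        ((∑ i : Fin N, if x ∈ J i then 1 / σ i ^ 2 else 0)
          + -∑ i : Fin N, if x ∈ J i then 1 / σ i ^ 2 else 0) = 0 := fun x => by ring
    rw [Finset.sum_congr rfl fun x _ => h1 x, Finset.sum_congr rfl fun x _ => h2 x]
    simp [hT]
  refine ⟨hQu, hQv, ?_⟩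
  -- positivity facts
  have hNE : Nonempty (Fin N) := ⟨⟨0, hN⟩⟩
  have hT0 : 0 < T := by
    rw [hT]
    apply Finset.sum_pos (fun i _ => by have := hτ i; positivity) Finset.univ_nonempty
  have hS0 : 0 ≤ S := by
    rw [hS]
    exact Finset.sum_nonneg fun i _ => by have := hσ i; positivity
  have hlmin : 0 < lmin := by
    have hsp := Matrix.IsHermitian.spectrum_real_eq_range_eigenvalues hPD.1
    have := hmin.1
    rw [hsp] at this
    obtain ⟨i, hi⟩ := this
    rw [← hi]
    exact hPD.eigenvalues_pos i
  have hlmax : 0 < lmax := lt_of_lt_of_le hlmin (hmax.2 lmin hmin.1)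
  set c : ℝ := (N : ℝ) + M with hc
  have hc0 : 0 < c := by
    rw [hc]
    have : (1 : ℝ) ≤ (N : ℝ) := by exact_mod_cast hN
    have : (0 : ℝ) ≤ (M : ℝ) := by positivity
    linarith
  have hUU : u ⬝ᵥ u = c := by
    subst hu
    simp [dotProduct, Fintype.sum_sum_type, hc]
  have hVV : v ⬝ᵥ v = c := by
    subst hv
    simp [dotProduct, Fintype.sum_sum_type, hc]
  have hup : T + 4 * S ≤ lmax * c := by
    have := rayleigh_upper' Ω hPD.1 lmax hmax.2 u
    rwa [hQu, hUU] at this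
  have hlo : lmin * c ≤ T := by
    have := rayleigh_lower' Ω hPD.1 lmin hmin.2 v
    rwa [hQv, hVV] at this
  have key : (T + 4 * S) / T ≤ lmax / lmin := by
    rw [div_le_div_iff₀ hT0 hlmin]
    nlinarith [mul_le_mul_of_nonneg_right hup hlmin.le,
      mul_le_mul_of_nonneg_left hlo hlmax.le]
  calc 1 + 4 * S / T = (T + 4 * S) / T := by field_simp
    _ ≤ lmax / lmin := key
end

section
/- Closed form of the marginal posterior of the variances: with γ and Ω as defined from the data and σ² (as in the quadratic expansion of the log posterior), suppose Ω is positive definite. Then ∫_{ℝ^{N+M}} p(B, G, σ²) d(B, G) = (2π)^{(N+M)/2} det(Ω)^{-1/2} · [∏_{i=1}^N σ_i^{−|J_i|−2−2α}] · exp{ (1/2) γᵀ Ω^{-1} γ − Σ_{i=1}^N [ (Σ_{j∈J_i} y_{ij}² + 2β)/(2σ_i²) + |J_i|σ_i²/8 + (1/2)Σ_{j∈J_i} y_{ij} + b_i²/(2τ_i²) ] }. In particular, the marginal posterior density of σ² is proportional (up to a constant free of σ²) to [∏ σ_i^{−|J_i|−2−2α}] det(Ω)^{-1/2} exp{ (1/2)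 μᵀΩμ − Σ_i [ (Σ_{j∈J_i} y_{ij}² + 2β)/(2σ_i²) + |J_i|σ_i²/8 ] } with μ = Ω^{-1}γ. -/
open Matrix

open MeasureTheory

open scoped MatrixOrder

private lemma gauss_central' {n : Type*} [Fintype n] [DecidableEq n]
    (Ω : Matrix n n ℝ) (hΩ : Ω.PosDef) :
    ∫ x : n → ℝ, Real.exp (-(1/2) * (x ⬝ᵥ Ω.mulVec x))
      = (2 * Real.pi) ^ ((Fintype.card n : ℝ) / 2) * Ω.det ^ (-(1/2) : ℝ) := by
  have hsd := hΩ.posSemidef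
  set S := CFC.sqrt Ω with hSdef
  have hSS : S * S = Ω := CFC.sqrt_mul_sqrt_self Ω hsd.nonneg
  have hSsym : Sᵀ = S := (CFC.sqrt_nonneg Ω).posSemidef.isHermitian
  have hdetS : S.det * S.det = Ω.det := by rw [← det_mul, hSS]
  have hdetΩ : 0 < Ω.det := hΩ.det_pos
  have hdetSnn : 0 ≤ S.det := by
    have h := (CFC.sqrt_nonneg Ω).posSemidef
    rw [h.1.det_eq_prod_eigenvalues]
    exact Finset.prod_nonneg fun i _ => h.eigenvalues_nonneg i
  have hdetSpos : 0 < S.det := lt_of_le_of_ne hdetSnn (by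
    intro h
    rw [← hdetS, ← h, mul_zero] at hdetΩ
    exact lt_irrefl _ hdetΩ)
  have hquad : ∀ x : n → ℝ, x ⬝ᵥ Ω.mulVec x = (S.mulVec x) ⬝ᵥ (S.mulVec x) := by
    intro x
    rw [← hSS, ← Matrix.mulVec_mulVec, Matrix.dotProduct_mulVec, ← Matrix.mulVec_transpose, hSsym]
  have hmap := Real.map_matrix_volume_pi_eq_smul_volume_pi (M := S) hdetSpos.ne'
  have hcont : Continuous (fun y : n → ℝ => Real.exp (-(1/2) * (y ⬝ᵥ y))) := by
    apply Real.continuous_exp.comp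
    apply Continuous.mul continuous_const
    unfold dotProduct
    exact continuous_finset_sum _ fun i _ =>
      ((continuous_apply i).mul (continuous_apply i))
  calc ∫ x : n → ℝ, Real.exp (-(1/2) * (x ⬝ᵥ Ω.mulVec x))
      = ∫ x : n → ℝ, Real.exp (-(1/2) * ((Matrix.toLin' S x) ⬝ᵥ (Matrix.toLin' S x))) := by
        simp_rw [Matrix.toLin'_apply, hquad]
    _ = ∫ y : n → ℝ, Real.exp (-(1/2) * (y ⬝ᵥ y)) ∂(Measure.map (Matrix.toLin' S) volume) := by
        rw [integral_map]
        · exact (Matrix.toLin' S).continuous_on_pi.aemeasurable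
        · exact hcont.aestronglyMeasurable
    _ = (S.det)⁻¹ * ∫ y : n → ℝ, Real.exp (-(1/2) * (y ⬝ᵥ y)) := by
        rw [hmap, integral_smul_measure]
        rw [ENNReal.toReal_ofReal (by positivity), abs_of_pos (by positivity)]
        simp [smul_eq_mul]
    _ = (2 * Real.pi) ^ ((Fintype.card n : ℝ) / 2) * Ω.det ^ (-(1/2) : ℝ) := by
        have h1 : ∀ y : n → ℝ,
            Real.exp (-(1/2) * (y ⬝ᵥ y)) = ∏ i, Real.exp (-(1/2) * (y i)^2) := by
          intro y
          rw [← Real.exp_sum]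
          congr 1
          unfold dotProduct
          rw [Finset.mul_sum]
          congr 1; ext i; ring
        simp_rw [h1]
        rw [integral_fintype_prod_volume_eq_pow (ι := n) (fun t : ℝ => Real.exp (-(1/2) * t^2))]
        have h2 : ∫ t : ℝ, Real.exp (-(1/2) * t^2) = Real.sqrt (2*Real.pi) := by
          rw [integral_gaussian]
          congr 1
          rw [div_div_eq_mul_div, div_one, mul_comm]
        rw [h2]
        have h2π : (0:ℝ) < 2 * Real.pi := by positivity
        have h3 : Real.sqrt (2*Real.pi) ^ (Fintype.card n)
            = (2 * Real.pi) ^ ((Fintype.card n : ℝ) / 2) := by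
          rw [Real.sqrt_eq_rpow, ← Real.rpow_natCast ((2*Real.pi) ^ ((1:ℝ)/2)) _,
            ← Real.rpow_mul h2π.le]
          ring_nf
        have h4 : S.det⁻¹ = Ω.det ^ (-(1/2) : ℝ) := by
          rw [← hdetS,
            show S.det * S.det = S.det ^ (2:ℝ) by
              rw [show ((2:ℝ)) = ((2:ℕ):ℝ) by norm_num, Real.rpow_natCast]; ring,
            ← Real.rpow_mul hdetSnn]
          norm_num [Real.rpow_neg_one]
        rw [h3, h4]; ring

private lemma gauss_linear' {n : Type*} [Fintype n] [DecidableEq n]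
    (Ω : Matrix n n ℝ) (hΩ : Ω.PosDef) (v : n → ℝ) (c : ℝ) :
    ∫ x : n → ℝ, Real.exp (-(1/2) * (x ⬝ᵥ Ω.mulVec x) + v ⬝ᵥ x - c)
      = (2 * Real.pi) ^ ((Fintype.card n : ℝ) / 2) * Ω.det ^ (-(1/2) : ℝ)
        * Real.exp ((1/2) * (v ⬝ᵥ (Ω⁻¹).mulVec v) - c) := by
  have central := gauss_central' Ω hΩ
  have hdet : IsUnit Ω.det := (isUnit_iff_ne_zero).2 hΩ.det_pos.ne'
  set μ := (Ω⁻¹).mulVec v with hμdef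
  have hμ : Ω.mulVec μ = v := by
    rw [hμdef, Matrix.mulVec_mulVec, Matrix.mul_nonsing_inv _ hdet, Matrix.one_mulVec]
  have hsym : Ωᵀ = Ω := hΩ.1
  have hμx : ∀ x : n → ℝ, μ ⬝ᵥ Ω.mulVec x = v ⬝ᵥ x := by
    intro x
    rw [Matrix.dotProduct_mulVec, ← Matrix.mulVec_transpose, hsym, hμ]
  have hxμ : ∀ x : n → ℝ, x ⬝ᵥ Ω.mulVec μ = v ⬝ᵥ x := by
    intro x; rw [hμ, dotProduct_comm]
  have hsq : ∀ x : n → ℝ,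
      -(1/2) * (x ⬝ᵥ Ω.mulVec x) + v ⬝ᵥ x - c
        = -(1/2) * ((x - μ) ⬝ᵥ Ω.mulVec (x - μ)) + ((1/2) * (v ⬝ᵥ μ) - c) := by
    intro x
    rw [Matrix.mulVec_sub, dotProduct_sub, sub_dotProduct,
      sub_dotProduct, hμx, hxμ, hμx μ]
    ring
  simp_rw [hsq, Real.exp_add, integral_mul_const]
  have htrans : ∫ x : n → ℝ, Real.exp (-(1/2) * ((x - μ) ⬝ᵥ Ω.mulVec (x - μ)))
      = ∫ x : n → ℝ, Real.exp (-(1/2) * (x ⬝ᵥ Ω.mulVec x)) :=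
    integral_sub_right_eq_self (fun x => Real.exp (-(1/2) * (x ⬝ᵥ Ω.mulVec x))) μ
  rw [htrans, central, Real.exp_sub]

private lemma per_i' (M : ℕ) (yi : Fin M → ℝ) (bi σi τi β u : ℝ) (hσ : σi ≠ 0)
    (g : Fin M → ℝ) (s : Finset (Fin M)) :
    -(1/2) * (∑ j ∈ s, (yi j + σi^2/2 - u - g j)^2 / σi^2) - ((bi - u)^2/(2*τi^2) + β/σi^2)
    = -(1/2) * (((s.card : ℝ)/σi^2 + 1/τi^2) * u^2 + ∑ j ∈ s, (2*u*g j + g j^2)/σi^2)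
      + ((bi/τi^2) * u + ∑ j ∈ s, (yi j/σi^2 + 1/2) * (u + g j))
      - (((∑ j ∈ s, yi j^2) + 2*β)/(2*σi^2) + (s.card:ℝ)*σi^2/8
        + (1/2)*∑ j ∈ s, yi j + bi^2/(2*τi^2)) := by
  have hterm : ∀ j, (yi j + σi^2/2 - u - g j)^2/σi^2
      = (yi j^2 + u^2 + g j^2 + 2*u*g j - 2*yi j*u - 2*yi j*g j)/σi^2
        + yi j - u - g j + σi^2/4 := by
    intro j
    field_simp
    ring
  simp_rw [hterm]
  induction s using Finset.induction with
  | empty => simp; ring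
  | @insert a s ha ih =>
    rw [Finset.sum_insert ha, Finset.sum_insert ha, Finset.sum_insert ha,
      Finset.sum_insert ha, Finset.sum_insert ha, Finset.card_insert_of_notMem ha]
    push_cast
    linear_combination ih
/-- Closed form of the marginal posterior of the variances: integrating the unnormalized
posterior over `(B, G)` gives
`(2π)^{(N+M)/2} det(Ω)^{-1/2} [∏ σ_i^{-|J_i|-2-2α}] exp{(1/2)γᵀΩ⁻¹γ - Σ_i [...]}`. -/
theorem marginal_posterior_closed_form
    (N M : ℕ) (hN : 1 ≤ N) (hM : 1 ≤ M)
    (J : Fin N → Finset (Fin M))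
    (y : Fin N → Fin M → ℝ) (b : Fin N → ℝ)
    (σ τ : Fin N → ℝ) (hσ : ∀ i, 0 < σ i) (hτ : ∀ i, 0 < τ i)
    (α β : ℝ) (hα : 0 < α) (hβ : 0 < β)
    (p : (Fin N → ℝ) → (Fin M → ℝ) → ℝ)
    (hp : ∀ (B : Fin N → ℝ) (G : Fin M → ℝ),
      p B G = (∏ i, σ i ^ (-((J i).card : ℝ) - 2 - 2 * α)) *
        Real.exp (-(1/2) * ∑ i, ∑ j ∈ J i, (y i j + σ i ^ 2 / 2 - B i - G j) ^ 2 / σ i ^ 2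
          - ∑ i, ((b i - B i) ^ 2 / (2 * τ i ^ 2) + β / σ i ^ 2)))
    (γ : (Fin N ⊕ Fin M) → ℝ)
    (hγ1 : ∀ i, γ (Sum.inl i)
      = (∑ j ∈ J i, y i j / σ i ^ 2) + b i / τ i ^ 2 + ((J i).card : ℝ) / 2)
    (hγ2 : ∀ j, γ (Sum.inr j)
      = (∑ i ∈ Finset.univ.filter (fun i => j ∈ J i), y i j / σ i ^ 2)
        + ((Finset.univ.filter (fun i => j ∈ J i)).card : ℝ) / 2)
    (Ω : Matrix (Fin N ⊕ Fin M) (Fin N ⊕ Fin M) ℝ)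
    (hΩ1 : ∀ i i' : Fin N, Ω (Sum.inl i) (Sum.inl i')
      = if i = i' then ((J i).card : ℝ) / σ i ^ 2 + 1 / τ i ^ 2 else 0)
    (hΩ2 : ∀ j j' : Fin M, Ω (Sum.inr j) (Sum.inr j')
      = if j = j' then ∑ i ∈ Finset.univ.filter (fun i => j ∈ J i), 1 / σ i ^ 2 else 0)
    (hΩ3 : ∀ (i : Fin N) (j : Fin M),
      Ω (Sum.inl i) (Sum.inr j) = if j ∈ J i then 1 / σ i ^ 2 else 0)
    (hΩ4 : ∀ (j : Fin M) (i : Fin N),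
      Ω (Sum.inr j) (Sum.inl i) = if j ∈ J i then 1 / σ i ^ 2 else 0)
    (hPD : Ω.PosDef) :
    ∫ θ : (Fin N → ℝ) × (Fin M → ℝ), p θ.1 θ.2
      = (2 * Real.pi) ^ (((N : ℝ) + M) / 2) * Ω.det ^ (-(1/2) : ℝ)
        * (∏ i, σ i ^ (-((J i).card : ℝ) - 2 - 2 * α))
        * Real.exp ((1/2) * γ ⬝ᵥ (Ω⁻¹).mulVec γ
            - ∑ i, (((∑ j ∈ J i, (y i j) ^ 2) + 2 * β) / (2 * σ i ^ 2)
              + ((J i).card : ℝ) * σ i ^ 2 / 8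
              + (1/2) * ∑ j ∈ J i, y i j
              + (b i) ^ 2 / (2 * τ i ^ 2))) := by
  classical
  -- transfer the integral to the sum-indexed pi type
  set K : ℝ := ∏ i, σ i ^ (-((J i).card : ℝ) - 2 - 2 * α) with hK
  have hswap : ∀ f : Fin N → Fin M → ℝ,
      ∑ j : Fin M, ∑ i ∈ Finset.univ.filter (fun i => j ∈ J i), f i j
        = ∑ i, ∑ j ∈ J i, f i j := by
    intro f
    simp_rw [Finset.sum_filter]
    rw [Finset.sum_comm]
    simp_rw [← Finset.sum_filter, Finset.filter_univ_mem]
  have hQ : ∀ x : (Fin N ⊕ Fin M) → ℝ, x ⬝ᵥ Ω.mulVec x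
      = ∑ i, ((((J i).card : ℝ) / σ i ^ 2 + 1 / τ i ^ 2) * x (Sum.inl i) ^ 2
          + ∑ j ∈ J i, (2 * x (Sum.inl i) * x (Sum.inr j) + x (Sum.inr j) ^ 2) / σ i ^ 2) := by
    intro x
    simp only [dotProduct, Matrix.mulVec, Fintype.sum_sum_type, hΩ1, hΩ2, hΩ3, hΩ4,
      ite_mul, zero_mul, Finset.sum_ite_eq, Finset.mem_univ, if_true,
      Finset.sum_ite_mem, Finset.univ_inter]
    simp_rw [← Finset.sum_filter, mul_add, Finset.mul_sum, Finset.sum_mul, Finset.sum_add_distrib]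
    rw [show (∑ j : Fin M, ∑ i ∈ Finset.filter (fun a => j ∈ J a) Finset.univ,
        x (Sum.inr j) * (1 / σ i ^ 2 * x (Sum.inl i)))
      = ∑ i, ∑ j ∈ J i, x (Sum.inr j) * (1 / σ i ^ 2 * x (Sum.inl i)) from hswap _]
    have hterm : ∀ j : Fin M,
        x (Sum.inr j) * ∑ i ∈ Finset.filter (fun a => j ∈ J a) Finset.univ,
            1 / σ i ^ 2 * x (Sum.inr j)
          = ∑ i ∈ Finset.filter (fun a => j ∈ J a) Finset.univ,
              x (Sum.inr j) * (1 / σ i ^ 2 * x (Sum.inr j)) :=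
      fun j => Finset.mul_sum _ _ _
    simp_rw [hterm]
    rw [show (∑ j : Fin M, ∑ i ∈ Finset.filter (fun a => j ∈ J a) Finset.univ,
        x (Sum.inr j) * (1 / σ i ^ 2 * x (Sum.inr j)))
      = ∑ i, ∑ j ∈ J i, x (Sum.inr j) * (1 / σ i ^ 2 * x (Sum.inr j)) from hswap _]
    rw [← Finset.sum_add_distrib, ← Finset.sum_add_distrib, ← Finset.sum_add_distrib,
      ← Finset.sum_add_distrib]
    refine Finset.sum_congr rfl fun i _ => ?_
    have inner : (∑ j ∈ J i, x (Sum.inl i) * (1 / σ i ^ 2 * x (Sum.inr j)))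
        + (∑ j ∈ J i, x (Sum.inr j) * (1 / σ i ^ 2 * x (Sum.inl i))
          + ∑ j ∈ J i, x (Sum.inr j) * (1 / σ i ^ 2 * x (Sum.inr j)))
        = ∑ j ∈ J i, (2 * x (Sum.inl i) * x (Sum.inr j) + x (Sum.inr j) ^ 2) / σ i ^ 2 := by
      rw [← Finset.sum_add_distrib, ← Finset.sum_add_distrib]
      exact Finset.sum_congr rfl fun j _ => by ring
    linear_combination inner
  have hL : ∀ x : (Fin N ⊕ Fin M) → ℝ, γ ⬝ᵥ x
      = ∑ i, ((b i / τ i ^ 2) * x (Sum.inl i)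
          + ∑ j ∈ J i, (y i j / σ i ^ 2 + 1/2) * (x (Sum.inl i) + x (Sum.inr j))) := by
    intro x
    have hrow : ∀ j : Fin M, γ (Sum.inr j) * x (Sum.inr j)
        = ∑ i ∈ Finset.univ.filter (fun i => j ∈ J i),
            (y i j / σ i ^ 2 + 1/2) * x (Sum.inr j) := by
      intro j
      rw [hγ2, Finset.cast_card, Finset.sum_div, ← Finset.sum_add_distrib, Finset.sum_mul]
    calc γ ⬝ᵥ x = ∑ i, γ (Sum.inl i) * x (Sum.inl i) + ∑ j, γ (Sum.inr j) * x (Sum.inr j) := by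
          simp [dotProduct, Fintype.sum_sum_type]
      _ = ∑ i, γ (Sum.inl i) * x (Sum.inl i)
          + ∑ i, ∑ j ∈ J i, (y i j / σ i ^ 2 + 1/2) * x (Sum.inr j) := by
          simp_rw [hrow]
          rw [show (∑ j : Fin M, ∑ i ∈ Finset.univ.filter (fun i => j ∈ J i),
              (y i j / σ i ^ 2 + 1/2) * x (Sum.inr j))
            = ∑ i, ∑ j ∈ J i, (y i j / σ i ^ 2 + 1/2) * x (Sum.inr j) from hswap _]
      _ = _ := by
          rw [← Finset.sum_add_distrib]
          refine Finset.sum_congr rfl fun i _ => ?_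
          rw [hγ1, Finset.cast_card, Finset.sum_div, add_mul, add_mul, Finset.sum_mul,
            Finset.sum_mul]
          have inner : (∑ j ∈ J i, y i j / σ i ^ 2 * x (Sum.inl i))
              + (∑ j ∈ J i, (1:ℝ) / 2 * x (Sum.inl i))
              + (∑ j ∈ J i, (y i j / σ i ^ 2 + 1/2) * x (Sum.inr j))
              = ∑ j ∈ J i, (y i j / σ i ^ 2 + 1/2) * (x (Sum.inl i) + x (Sum.inr j)) := by
            rw [← Finset.sum_add_distrib, ← Finset.sum_add_distrib]
            exact Finset.sum_congr rfl fun j _ => by ring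
          linear_combination inner
  set C : ℝ := ∑ i, (((∑ j ∈ J i, (y i j) ^ 2) + 2 * β) / (2 * σ i ^ 2)
      + ((J i).card : ℝ) * σ i ^ 2 / 8
      + (1/2) * ∑ j ∈ J i, y i j
      + (b i) ^ 2 / (2 * τ i ^ 2)) with hC
  have hexp : ∀ x : (Fin N ⊕ Fin M) → ℝ,
      (-(1/2) * ∑ i, ∑ j ∈ J i,
          (y i j + σ i ^ 2 / 2 - x (Sum.inl i) - x (Sum.inr j)) ^ 2 / σ i ^ 2
        - ∑ i, ((b i - x (Sum.inl i)) ^ 2 / (2 * τ i ^ 2) + β / σ i ^ 2))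
      = -(1/2) * (x ⬝ᵥ Ω.mulVec x) + γ ⬝ᵥ x - C := by
    intro x
    rw [hQ x, hL x, hC]
    rw [Finset.mul_sum, Finset.mul_sum, ← Finset.sum_sub_distrib, ← Finset.sum_add_distrib,
      ← Finset.sum_sub_distrib]
    exact Finset.sum_congr rfl fun i _ =>
      per_i' M (y i) (b i) (σ i) (τ i) β (x (Sum.inl i)) (hσ i).ne'
        (fun j => x (Sum.inr j)) (J i)
  have key : ∀ x : (Fin N ⊕ Fin M) → ℝ,
      p (fun i => x (Sum.inl i)) (fun j => x (Sum.inr j))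
        = K * Real.exp (-(1/2) * (x ⬝ᵥ Ω.mulVec x) + γ ⬝ᵥ x - C) := by
    intro x
    rw [hp, ← hexp x]
  have e := MeasurableEquiv.sumPiEquivProdPi (fun _ : Fin N ⊕ Fin M => ℝ)
  have hmp := MeasureTheory.volume_measurePreserving_sumPiEquivProdPi_symm
    (fun _ : Fin N ⊕ Fin M => ℝ)
  have htransfer : ∫ θ : (Fin N → ℝ) × (Fin M → ℝ), p θ.1 θ.2
      = ∫ x : (Fin N ⊕ Fin M) → ℝ,
          p (fun i => x (Sum.inl i)) (fun j => x (Sum.inr j)) := by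
    rw [← hmp.integral_comp
      (MeasurableEquiv.sumPiEquivProdPi (fun _ : Fin N ⊕ Fin M => ℝ)).symm.measurableEmbedding
      (fun x : (Fin N ⊕ Fin M) → ℝ =>
        p (fun i => x (Sum.inl i)) (fun j => x (Sum.inr j)))]
    rfl
  rw [htransfer]
  simp_rw [key]
  rw [MeasureTheory.integral_const_mul, gauss_linear' Ω hPD γ C]
  have hcard : (Fintype.card (Fin N ⊕ Fin M) : ℝ) = (N : ℝ) + M := by
    simp [Fintype.card_sum]
  rw [hcard]
  ring
end
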